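/- arXiv:1602.06735 — 2 statements merged into one kernel-verified Lean document; each statement's English description precedes it below -/
import Mathlib

section
/- Let S be a p-scheme of order p^3 whose thin residue O^θ(S) is isomorphic (as a group of thin relations) to C_p × C_p. Then S is commutative if and only if O^θ(S)s = {s} for every s ∈ S ∖ O^θ(S) (i.e., the complex product of the thin residue with any relation outside it is that single relation). -/
open Set

/-- The diagonal relation `1_X` on a set `X`. -/
def schemeDiag (X : Type*) : Set (X × X) := {p | p.1 = p.2}

/-- The transpose `s*` of a relation `s`. -/
def schemeTransp {X : Type*} (s : Set (X × X)) : Set (X × X) := {p | (p.2, p.1) ∈ s}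

/-- An association scheme on a finite set `X`: a partition of `X × X` containing the
diagonal, closed under transposition, with well-defined intersection numbers `a s t u`. -/
structure AssocScheme (X : Type*) [Fintype X] where
  rels : Set (Set (X × X))
  partition : ∀ p : X × X, ∃! s, s ∈ rels ∧ p ∈ s
  diag_mem : schemeDiag X ∈ rels
  transpose_mem : ∀ s ∈ rels, schemeTransp s ∈ rels
  a : Set (X × X) → Set (X × X) → Set (X × X) → ℕ
  a_spec : ∀ s ∈ rels, ∀ t ∈ rels, ∀ u ∈ rels, ∀ x y : X, (x, y) ∈ u →
    a s t u = Nat.card {z : X | (x, z) ∈ s ∧ (z, y) ∈ t}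

namespace AssocScheme

variable {X : Type*} [Fintype X] (S : AssocScheme X)

/-- The valency `n_s = a_{s s* 1_X}` of a relation. -/
def val (s : Set (X × X)) : ℕ := S.a s (schemeTransp s) (schemeDiag X)

/-- The complex product `uv` of two relations. -/
def cprod (u v : Set (X × X)) : Set (Set (X × X)) := {s ∈ S.rels | S.a u v s ≠ 0}

/-- The complex product `PQ` of two sets of relations. -/
def sprod (P Q : Set (Set (X × X))) : Set (Set (X × X)) :=
  {s ∈ S.rels | ∃ p ∈ P, ∃ q ∈ Q, S.a p q s ≠ 0}

/-- A (nonempty) closed subset of the scheme. -/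
def IsClosedSubset (T : Set (Set (X × X))) : Prop :=
  T.Nonempty ∧ T ⊆ S.rels ∧ ∀ u ∈ T, ∀ v ∈ T, S.cprod u v ⊆ T

/-- The thin radical `O_θ(S)`: the set of relations of valency 1. -/
def thinRadical : Set (Set (X × X)) := {s ∈ S.rels | S.val s = 1}

/-- The smallest closed subset containing all `t* t` for `t ∈ T`. -/
def resOf (T : Set (Set (X × X))) : Set (Set (X × X)) :=
  ⋂₀ {U | S.IsClosedSubset U ∧ ∀ t ∈ T, S.cprod (schemeTransp t) t ⊆ U}

/-- The thin residue `O^θ(S) = ⟨⋃_{s ∈ S} s* s⟩`. -/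
def thinResidue : Set (Set (X × X)) := S.resOf S.rels

/-- The order `n_U = ∑_{u ∈ U} n_u` of a set of relations. -/
noncomputable def nOrd (U : Set (Set (X × X))) : ℕ := ∑ᶠ u ∈ U, S.val u

/-- Commutativity of the scheme. -/
def IsCommutative : Prop :=
  ∀ u ∈ S.rels, ∀ v ∈ S.rels, ∀ w ∈ S.rels, S.a u v w = S.a v u w

/-- `S` is a `p`-scheme: `|X|` and all valencies are powers of the prime `p`. -/
def IsPScheme (p : ℕ) : Prop :=
  p.Prime ∧ (∃ n, Fintype.card X = p ^ n) ∧ ∀ s ∈ S.rels, ∃ i, S.val s = p ^ i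

/-- `S` is schurian: its relations are the orbitals of a transitive permutation group. -/
def IsSchurian : Prop :=
  ∃ G : Subgroup (Equiv.Perm X), (∀ x y : X, ∃ g ∈ G, g x = y) ∧
    S.rels = {o | ∃ q : X × X, o = {r : X × X | ∃ g ∈ G, (g q.1, g q.2) = r}}

/-- The right stabilizer `R(s) = {t | st = s}`. -/
def Rstab (s : Set (X × X)) : Set (Set (X × X)) := {t ∈ S.rels | S.cprod s t = {s}}

/-- The left stabilizer `L(s) = {t | ts = s}`. -/
def Lstab (s : Set (X × X)) : Set (Set (X × X)) := {t ∈ S.rels | S.cprod t s = {s}}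

/-- A faithful map: `r(x,y) = r(φ x, φ y)` for all `x, y`. -/
def IsFaithful (φ : X → X) : Prop :=
  ∀ x y : X, ∀ s ∈ S.rels, (x, y) ∈ s → (φ x, φ y) ∈ s

/-- An automorphism of the scheme. -/
def IsAutomorphism (φ : X → X) : Prop := Function.Bijective φ ∧ S.IsFaithful φ

/-- The quotient scheme `S // T` is isomorphic to the cyclic group `C_m`:
there is a surjection `f : X → ZMod m` whose difference map classifies the
double-coset relations `T s T`. -/
def QuotIsoCyclic (T : Set (Set (X × X))) (m : ℕ) : Prop :=
  ∃ f : X → ZMod m, Function.Surjective f ∧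
    ∀ x y x' y' : X, (f y - f x = f y' - f x') ↔
      ∃ s ∈ S.rels, (x, y) ∈ s ∧ ∃ s' ∈ S.sprod (S.sprod T {s}) T, (x', y') ∈ s'

/-- A thin closed subset `T` is isomorphic, as a group under the relational
product, to the additive group `G`. -/
def ThinGroupIso (T : Set (Set (X × X))) (G : Type*) [AddGroup G] : Prop :=
  (∀ t ∈ T, S.val t = 1) ∧ ∃ f : Set (X × X) → G, Set.BijOn f T Set.univ ∧
    ∀ t1 ∈ T, ∀ t2 ∈ T, ∀ u, S.cprod t1 t2 = {u} → f u = f t1 + f t2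

end AssocScheme

/-- The set of relations of the wreath product `F ≀ H`. -/
def wreathRels {W Y : Type*} [Fintype W] [Fintype Y]
    (F : AssocScheme W) (H : AssocScheme Y) : Set (Set ((W × Y) × (W × Y))) :=
  {r | ∃ f ∈ F.rels, r = {p : (W × Y) × (W × Y) | p.1.2 = p.2.2 ∧ (p.1.1, p.2.1) ∈ f}} ∪
  {r | ∃ h ∈ H.rels, h ≠ schemeDiag Y ∧
    r = {p : (W × Y) × (W × Y) | (p.1.2, p.2.2) ∈ h}}

set_option linter.unusedSectionVars false
open scoped Classical


section
variable {X : Type*} [Fintype X]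

lemma natCard_eq_filter (P : X → Prop) :
    Nat.card {x | P x} = (Finset.univ.filter P).card := by
  rw [Nat.card_eq_fintype_card, Fintype.card_subtype]
  simp only [Set.mem_setOf_eq]

lemma natCard_ne_zero_iff (P : X → Prop) :
    Nat.card {x | P x} ≠ 0 ↔ ∃ x, P x := by
  rw [natCard_eq_filter, ← Nat.pos_iff_ne_zero, Finset.card_pos]
  simp [Finset.filter_nonempty_iff]

lemma natCard_le_of_imp {P Q : X → Prop} (h : ∀ x, P x → Q x) :
    Nat.card {x | P x} ≤ Nat.card {x | Q x} := by
  rw [natCard_eq_filter, natCard_eq_filter]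
  exact Finset.card_le_card (by simpa [Finset.subset_iff] using h)

lemma natCard_eq_one_iff (P : X → Prop) :
    Nat.card {x | P x} = 1 ↔ (∃ x, P x) ∧ ∀ x y, P x → P y → x = y := by
  rw [natCard_eq_filter, Finset.card_eq_one]
  constructor
  · rintro ⟨a, ha⟩
    have h1 : ∀ x, P x ↔ x = a := fun x => by
      rw [← Finset.mem_singleton, ← ha, Finset.mem_filter]; simp
    exact ⟨⟨a, (h1 a).mpr rfl⟩, fun x y hx hy => ((h1 x).mp hx).trans ((h1 y).mp hy).symm⟩
  · rintro ⟨⟨a, ha⟩, huniq⟩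
    refine ⟨a, ?_⟩
    ext x
    simp only [Finset.mem_filter, Finset.mem_univ, true_and, Finset.mem_singleton]
    exact ⟨fun hx => huniq x a hx ha, fun h => h ▸ ha⟩

end

section
variable {X : Type*} [Fintype X]

lemma natCard_of_empty {P : X → Prop} (h : ∀ x, ¬ P x) : Nat.card {x | P x} = 0 := by
  by_contra h'
  obtain ⟨x, hx⟩ := (natCard_ne_zero_iff P).mp h'
  exact h x hx

lemma natCard_congr {P Q : X → Prop} (h : ∀ x, P x ↔ Q x) :
    Nat.card {x | P x} = Nat.card {x | Q x} := by
  have : {x | P x} = {x | Q x} := by ext x; exact h x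
  rw [this]

end
namespace AssocScheme

variable {X : Type*} [Fintype X] {S : AssocScheme X}

lemma mem_diag {x y : X} : (x, y) ∈ schemeDiag X ↔ x = y := Iff.rfl

lemma mem_transp {s : Set (X × X)} {x y : X} : (x, y) ∈ schemeTransp s ↔ (y, x) ∈ s := Iff.rfl

lemma transp_transp (s : Set (X × X)) : schemeTransp (schemeTransp s) = s := by
  ext ⟨x, y⟩; rfl

lemma transp_diag : schemeTransp (schemeDiag X) = schemeDiag X := by
  ext ⟨x, y⟩
  simp [schemeTransp, schemeDiag, eq_comm]

/-- The unique relation containing a pair. -/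
noncomputable def relOf (S : AssocScheme X) (q : X × X) : Set (X × X) :=
  Classical.choose (S.partition q).exists

lemma relOf_mem (q : X × X) : S.relOf q ∈ S.rels :=
  (Classical.choose_spec (S.partition q).exists).1

lemma mem_relOf (q : X × X) : q ∈ S.relOf q :=
  (Classical.choose_spec (S.partition q).exists).2

lemma relOf_eq {s : Set (X × X)} {q : X × X} (hs : s ∈ S.rels) (hq : q ∈ s) :
    S.relOf q = s :=
  (S.partition q).unique ⟨relOf_mem q, mem_relOf q⟩ ⟨hs, hq⟩

lemma rels_eq {s t : Set (X × X)} (hs : s ∈ S.rels) (ht : t ∈ S.rels) {q : X × X}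
    (hqs : q ∈ s) (hqt : q ∈ t) : s = t := by
  rw [← relOf_eq hs hqs, relOf_eq ht hqt]

lemma a_card {s t u : Set (X × X)} (hs : s ∈ S.rels) (ht : t ∈ S.rels) (hu : u ∈ S.rels)
    {x y : X} (hxy : (x, y) ∈ u) :
    S.a s t u = Nat.card {z | (x, z) ∈ s ∧ (z, y) ∈ t} :=
  S.a_spec s hs t ht u hu x y hxy

lemma a_ne_zero_iff {s t u : Set (X × X)} (hs : s ∈ S.rels) (ht : t ∈ S.rels)
    (hu : u ∈ S.rels) {x y : X} (hxy : (x, y) ∈ u) :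
    S.a s t u ≠ 0 ↔ ∃ z, (x, z) ∈ s ∧ (z, y) ∈ t := by
  rw [a_card hs ht hu hxy, natCard_ne_zero_iff]

lemma val_card {s : Set (X × X)} (hs : s ∈ S.rels) (x : X) :
    S.val s = Nat.card {y | (x, y) ∈ s} := by
  have h := a_card hs (S.transpose_mem s hs) S.diag_mem (show (x, x) ∈ schemeDiag X from rfl)
  have hset : {z | (x, z) ∈ s ∧ (z, x) ∈ schemeTransp s} = {z | (x, z) ∈ s} := by
    ext z
    exact ⟨fun h => h.1, fun h => ⟨h, h⟩⟩
  rw [val, h, hset]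

lemma val_pos {p : ℕ} (hp : S.IsPScheme p) {s : Set (X × X)} (hs : s ∈ S.rels) :
    0 < S.val s := by
  obtain ⟨i, hi⟩ := hp.2.2 s hs
  rw [hi]
  exact pow_pos hp.1.pos i

section hv
variable (hv : ∀ s ∈ S.rels, 0 < S.val s)
include hv

lemma exists_out {s : Set (X × X)} (hs : s ∈ S.rels) (x : X) : ∃ y, (x, y) ∈ s := by
  rw [← natCard_ne_zero_iff (fun y => (x, y) ∈ s)]
  rw [show Nat.card {y | (x,y) ∈ s} = S.val s from (val_card hs x).symm]
  exact (hv s hs).ne'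

lemma exists_in {s : Set (X × X)} (hs : s ∈ S.rels) (y : X) : ∃ x, (x, y) ∈ s := by
  obtain ⟨x, hx⟩ := exists_out hv (S.transpose_mem s hs) y
  exact ⟨x, hx⟩

lemma rel_nonempty [Nonempty X] {s : Set (X × X)} (hs : s ∈ S.rels) : s.Nonempty := by
  obtain ⟨y, hy⟩ := exists_out hv hs (Classical.arbitrary X)
  exact ⟨(_, y), hy⟩

end hv

lemma card_pairs_fst (R : X × X → Prop) :
    (Finset.univ.filter R).card = ∑ x, (Finset.univ.filter fun y => R (x, y)).card := by
  rw [Finset.card_eq_sum_card_fiberwise (f := Prod.fst) (t := Finset.univ)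
    (fun _ _ => Finset.mem_univ _)]
  refine Finset.sum_congr rfl fun x _ => ?_
  refine Finset.card_nbij' (i := Prod.snd) (j := fun y => (x, y)) ?_ ?_ ?_ ?_
  · rintro ⟨a, b⟩ hq
    simp only [Finset.mem_coe, Finset.mem_filter, Finset.mem_univ, true_and] at hq ⊢
    obtain ⟨h1, h2⟩ := hq
    subst h2
    exact h1
  · intro y hy
    simp only [Finset.mem_coe, Finset.mem_filter, Finset.mem_univ, true_and] at hy ⊢
    simp [hy]
  · rintro ⟨a, b⟩ hq
    simp only [Finset.mem_coe, Finset.mem_filter, Finset.mem_univ, true_and] at hq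
    simp [hq.2]
  · intro y _
    rfl

lemma card_pairs_snd (R : X × X → Prop) :
    (Finset.univ.filter R).card = ∑ y, (Finset.univ.filter fun x => R (x, y)).card := by
  have := card_pairs_fst (fun q : X × X => R (q.2, q.1))
  rw [← this]
  refine Finset.card_nbij' (i := fun q => (q.2, q.1)) (j := fun q => (q.2, q.1)) ?_ ?_ ?_ ?_ <;>
    simp [Finset.mem_filter, Set.MapsTo, Set.LeftInvOn, Set.RightInvOn]


lemma natCard_pairs_fst (R : X × X → Prop) :
    Nat.card {q : X × X | R q} = ∑ x, Nat.card {y | R (x, y)} := by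
  rw [natCard_eq_filter, card_pairs_fst]
  exact Finset.sum_congr rfl fun x _ => (natCard_eq_filter _).symm

lemma natCard_pairs_snd (R : X × X → Prop) :
    Nat.card {q : X × X | R q} = ∑ y, Nat.card {x | R (x, y)} := by
  rw [natCard_eq_filter, card_pairs_snd]
  exact Finset.sum_congr rfl fun y _ => (natCard_eq_filter _).symm

lemma natCard_pairs_key {B : Type*} (R : X × X → Prop) (key : X × X → B)
    (F : Finset B) (hkey : ∀ q, R q → key q ∈ F) :
    Nat.card {q : X × X | R q} = ∑ u ∈ F, Nat.card {q : X × X | R q ∧ key q = u} := by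
  rw [natCard_eq_filter]
  rw [Finset.card_eq_sum_card_fiberwise (f := key) (t := F)
    (fun q hq => hkey q (Finset.mem_filter.mp hq).2)]
  refine Finset.sum_congr rfl fun u _ => ?_
  rw [natCard_eq_filter]
  congr 1
  ext q
  simp only [Finset.mem_filter, Finset.mem_univ, true_and]

lemma val_transp [Nonempty X] {s : Set (X × X)} (hs : s ∈ S.rels) :
    S.val (schemeTransp s) = S.val s := by
  have h1 : (Finset.univ.filter fun q : X × X => q ∈ s).card = Fintype.card X * S.val s := by
    rw [card_pairs_fst (fun q : X × X => q ∈ s)]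
    rw [Finset.sum_congr rfl (fun x _ => by
      rw [show (Finset.univ.filter fun y => (x, y) ∈ s).card = S.val s from by
        rw [val_card hs x, natCard_eq_filter]])]
    simp [Finset.sum_const, mul_comm]
  have h2 : (Finset.univ.filter fun q : X × X => q ∈ s).card
      = Fintype.card X * S.val (schemeTransp s) := by
    rw [card_pairs_snd (fun q : X × X => q ∈ s)]
    rw [Finset.sum_congr rfl (fun y _ => by
      rw [show (Finset.univ.filter fun x => (x, y) ∈ s).card = S.val (schemeTransp s) from by
        rw [val_card (S.transpose_mem s hs) y, natCard_eq_filter]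
        rfl])]
    simp [Finset.sum_const, mul_comm]
  have h3 : Fintype.card X * S.val s = Fintype.card X * S.val (schemeTransp s) := by
    rw [← h1, h2]
  exact (Nat.eq_of_mul_eq_mul_left Fintype.card_pos h3).symm

end AssocScheme
namespace AssocScheme

variable {X : Type*} [Fintype X] {S : AssocScheme X}

/-- Relational composition. -/
def rcomp (s t : Set (X × X)) : Set (X × X) := {q | ∃ z, (q.1, z) ∈ s ∧ (z, q.2) ∈ t}

lemma mem_rcomp {s t : Set (X × X)} {x y : X} :
    (x, y) ∈ rcomp s t ↔ ∃ z, (x, z) ∈ s ∧ (z, y) ∈ t := Iff.rfl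

lemma rcomp_assoc (s t u : Set (X × X)) : rcomp (rcomp s t) u = rcomp s (rcomp t u) := by
  ext ⟨x, y⟩
  constructor
  · rintro ⟨z, ⟨w, hw1, hw2⟩, hz⟩
    exact ⟨w, hw1, z, hw2, hz⟩
  · rintro ⟨w, hw, z, hz1, hz2⟩
    exact ⟨z, ⟨w, hw, hz1⟩, hz2⟩

lemma rcomp_diag_right (s : Set (X × X)) : rcomp s (schemeDiag X) = s := by
  ext ⟨x, y⟩
  constructor
  · rintro ⟨z, hz, h⟩
    have : z = y := h
    exact this ▸ hz
  · intro h
    exact ⟨y, h, rfl⟩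

lemma rcomp_diag_left (s : Set (X × X)) : rcomp (schemeDiag X) s = s := by
  ext ⟨x, y⟩
  constructor
  · rintro ⟨z, h, hz⟩
    have : x = z := h
    exact this ▸ hz
  · intro h
    exact ⟨x, rfl, h⟩

lemma transp_rcomp (s t : Set (X × X)) :
    schemeTransp (rcomp s t) = rcomp (schemeTransp t) (schemeTransp s) := by
  ext ⟨x, y⟩
  constructor
  · rintro ⟨z, hz1, hz2⟩
    exact ⟨z, hz2, hz1⟩
  · rintro ⟨z, hz1, hz2⟩
    exact ⟨z, hz2, hz1⟩

lemma rcomp_mono_left {s s' : Set (X × X)} (t : Set (X × X)) (h : s ⊆ s') :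
    rcomp s t ⊆ rcomp s' t := by
  rintro ⟨x, y⟩ ⟨z, hz1, hz2⟩
  exact ⟨z, h hz1, hz2⟩

lemma thin_out_unique {t : Set (X × X)} (ht : t ∈ S.rels) (ht1 : S.val t = 1)
    {x y y' : X} (h1 : (x, y) ∈ t) (h2 : (x, y') ∈ t) : y = y' := by
  have h := (val_card ht x).symm.trans ht1
  exact ((natCard_eq_one_iff _).mp h).2 y y' h1 h2

lemma thin_in_unique [Nonempty X] {t : Set (X × X)} (ht : t ∈ S.rels) (ht1 : S.val t = 1)
    {x x' y : X} (h1 : (x, y) ∈ t) (h2 : (x', y) ∈ t) : x = x' := by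
  have htt : S.val (schemeTransp t) = 1 := (val_transp ht).trans ht1
  exact thin_out_unique (S.transpose_mem t ht) htt (mem_transp.mpr h1) (mem_transp.mpr h2)

section hv
variable (hv : ∀ s ∈ S.rels, 0 < S.val s)
include hv

variable [Nonempty X]

lemma rcomp_transp_self {t : Set (X × X)} (ht : t ∈ S.rels) (ht1 : S.val t = 1) :
    rcomp (schemeTransp t) t = schemeDiag X := by
  ext ⟨x, y⟩
  constructor
  · rintro ⟨z, hz1, hz2⟩
    exact thin_out_unique ht ht1 (mem_transp.mp hz1) hz2
  · intro h
    have : x = y := h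
    subst this
    obtain ⟨z, hz⟩ := exists_in hv ht x
    exact ⟨z, mem_transp.mpr hz, hz⟩

lemma rcomp_self_transp {t : Set (X × X)} (ht : t ∈ S.rels) (ht1 : S.val t = 1) :
    rcomp t (schemeTransp t) = schemeDiag X := by
  ext ⟨x, y⟩
  constructor
  · rintro ⟨z, hz1, hz2⟩
    exact thin_in_unique ht ht1 hz1 (mem_transp.mp hz2)
  · intro h
    have : x = y := h
    subst this
    obtain ⟨z, hz⟩ := exists_out hv ht x
    exact ⟨z, hz, mem_transp.mpr hz⟩

lemma thin_claim1 {s t u : Set (X × X)} (hs : s ∈ S.rels) (ht : t ∈ S.rels)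
    (htt : S.val (schemeTransp t) = 1) (hu : u ∈ S.rels) {q : X × X}
    (hq : q ∈ u) (hqc : q ∈ rcomp s t) : S.a s t u = 1 ∧ u ⊆ rcomp s t := by
  obtain ⟨α, β⟩ := q
  have ha : S.a s t u = 1 := by
    rw [a_card hs ht hu hq, natCard_eq_one_iff]
    obtain ⟨z, hz1, hz2⟩ := hqc
    refine ⟨⟨z, hz1, hz2⟩, fun z1 z2 h1 h2 => ?_⟩
    exact thin_out_unique (S.transpose_mem t ht) htt (mem_transp.mpr h1.2) (mem_transp.mpr h2.2)
  refine ⟨ha, ?_⟩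
  rintro ⟨γ, δ⟩ hmem
  have h2 : S.a s t u = Nat.card {z | (γ, z) ∈ s ∧ (z, δ) ∈ t} := a_card hs ht hu hmem
  have h3 : Nat.card {z | (γ, z) ∈ s ∧ (z, δ) ∈ t} ≠ 0 := by rw [← h2, ha]; omega
  obtain ⟨z, hz⟩ := (natCard_ne_zero_iff _).mp h3
  exact ⟨z, hz.1, hz.2⟩

lemma thin_right {s t : Set (X × X)} (hs : s ∈ S.rels) (ht : t ∈ S.rels)
    (ht1 : S.val t = 1) :
    rcomp s t ∈ S.rels ∧ S.cprod s t = {rcomp s t} ∧ S.val (rcomp s t) = S.val s := by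
  have htt : S.val (schemeTransp t) = 1 := (val_transp ht).trans ht1
  obtain ⟨⟨x0, z0⟩, hx0⟩ := rel_nonempty hv hs
  obtain ⟨y0, hy0⟩ := exists_out hv ht z0
  have hq0 : (x0, y0) ∈ rcomp s t := ⟨z0, hx0, hy0⟩
  set r := S.relOf (x0, y0) with hrdef
  have hr : r ∈ S.rels := relOf_mem _
  have hq0r : (x0, y0) ∈ r := mem_relOf _
  have h1 : r ⊆ rcomp s t := (thin_claim1 hv hs ht htt hr hq0r hq0).2
  have claim2 : r = rcomp s t := by
    have h2 : rcomp r (schemeTransp t) ⊆ s := by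
      have := rcomp_mono_left (schemeTransp t) h1
      rw [rcomp_assoc, rcomp_self_transp hv ht ht1, rcomp_diag_right] at this
      exact this
    have h3 : (x0, z0) ∈ rcomp r (schemeTransp t) := ⟨y0, hq0r, mem_transp.mpr hy0⟩
    have httt : S.val (schemeTransp (schemeTransp t)) = 1 := by
      rw [transp_transp]; exact ht1
    have h4 : s ⊆ rcomp r (schemeTransp t) :=
      (thin_claim1 hv hr (S.transpose_mem t ht) httt hs (h2 h3) h3).2
    have h5 : s = rcomp r (schemeTransp t) := Set.Subset.antisymm h4 h2
    calc r = rcomp r (schemeDiag X) := (rcomp_diag_right r).symm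
      _ = rcomp r (rcomp (schemeTransp t) t) := by rw [rcomp_transp_self hv ht ht1]
      _ = rcomp (rcomp r (schemeTransp t)) t := (rcomp_assoc _ _ _).symm
      _ = rcomp s t := by rw [← h5]
  have hmem : rcomp s t ∈ S.rels := claim2 ▸ hr
  have hcp : S.cprod s t = {rcomp s t} := by
    ext u
    constructor
    · rintro ⟨hu, ha⟩
      obtain ⟨q1, hq1⟩ := rel_nonempty hv hu
      obtain ⟨z, hz1, hz2⟩ := (a_ne_zero_iff hs ht hu hq1).mp ha
      have : q1 ∈ rcomp s t := ⟨z, hz1, hz2⟩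
      exact rels_eq hu hmem hq1 this
    · rintro rfl
      exact ⟨hmem, by rw [(thin_claim1 hv hs ht htt hmem hq0 hq0).1]; omega⟩
  refine ⟨hmem, hcp, ?_⟩
  have hle1 : S.val s ≤ S.val (rcomp s t) := by
    rw [val_card hs x0, val_card hmem x0, natCard_eq_filter, natCard_eq_filter]
    refine Finset.card_le_card_of_injOn (fun z => (exists_out hv ht z).choose) ?_ ?_
    · intro z hz
      simp only [Finset.mem_coe, Finset.mem_filter, Finset.mem_univ, true_and] at hz ⊢
      exact ⟨z, hz, (exists_out hv ht z).choose_spec⟩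
    · intro z1 h1 z2 h2 heq
      have heq2 : (exists_out hv ht z1).choose = (exists_out hv ht z2).choose := heq
      have e2 := (exists_out hv ht z2).choose_spec
      rw [← heq2] at e2
      exact thin_in_unique ht ht1 (exists_out hv ht z1).choose_spec e2
  have hle2 : S.val (rcomp s t) ≤ S.val s := by
    rw [val_card hs x0, val_card hmem x0, natCard_eq_filter, natCard_eq_filter]
    have hch : ∀ y : X, (x0, y) ∈ rcomp s t → ∃ z, (x0, z) ∈ s ∧ (z, y) ∈ t := fun y h => h
    refine Finset.card_le_card_of_injOn
      (fun y => if h : (x0, y) ∈ rcomp s t then (hch y h).choose else x0) ?_ ?_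
    · intro y hy
      have hy' : (x0, y) ∈ rcomp s t := by simpa using hy
      simp only [Finset.mem_coe, Finset.mem_filter, Finset.mem_univ, true_and]
      beta_reduce
      rw [dif_pos hy']
      exact (hch y hy').choose_spec.1
    · intro y1 h1 y2 h2 heq
      simp only [Finset.coe_filter, Finset.mem_univ, true_and, Set.mem_setOf_eq] at h1 h2
      have heq2 : (if h : (x0, y1) ∈ rcomp s t then (hch y1 h).choose else x0)
          = (if h : (x0, y2) ∈ rcomp s t then (hch y2 h).choose else x0) := heq
      rw [dif_pos h1, dif_pos h2] at heq2
      have heq := heq2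
      have e1 := (hch y1 h1).choose_spec.2
      have e2 := (hch y2 h2).choose_spec.2
      rw [heq] at e1
      exact thin_out_unique ht ht1 e1 e2
  omega

lemma cprod_transp_iff {s t r : Set (X × X)} (hs : s ∈ S.rels) (ht : t ∈ S.rels) :
    r ∈ S.cprod s t ↔ schemeTransp r ∈ S.cprod (schemeTransp t) (schemeTransp s) := by
  constructor
  · rintro ⟨hr, ha⟩
    obtain ⟨⟨α, β⟩, hq⟩ := rel_nonempty hv hr
    obtain ⟨z, hz1, hz2⟩ := (a_ne_zero_iff hs ht hr hq).mp ha
    refine ⟨S.transpose_mem r hr, ?_⟩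
    rw [a_ne_zero_iff (S.transpose_mem t ht) (S.transpose_mem s hs) (S.transpose_mem r hr)
      (mem_transp.mpr hq)]
    exact ⟨z, mem_transp.mpr hz2, mem_transp.mpr hz1⟩
  · rintro ⟨hr, ha⟩
    have hr' : r ∈ S.rels := by
      have := S.transpose_mem _ hr
      rwa [transp_transp] at this
    obtain ⟨⟨α, β⟩, hq⟩ := rel_nonempty hv hr'
    obtain ⟨z, hz1, hz2⟩ := (a_ne_zero_iff (S.transpose_mem t ht) (S.transpose_mem s hs) hr
      (mem_transp.mpr hq)).mp ha
    refine ⟨hr', ?_⟩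
    rw [a_ne_zero_iff hs ht hr' hq]
    exact ⟨z, mem_transp.mp hz2, mem_transp.mp hz1⟩

lemma thin_left {s t : Set (X × X)} (hs : s ∈ S.rels) (ht : t ∈ S.rels)
    (ht1 : S.val t = 1) :
    rcomp t s ∈ S.rels ∧ S.cprod t s = {rcomp t s} ∧ S.val (rcomp t s) = S.val s := by
  have htt : S.val (schemeTransp t) = 1 := (val_transp ht).trans ht1
  obtain ⟨hm, hc, hval⟩ := thin_right hv (S.transpose_mem s hs) (S.transpose_mem t ht) htt
  have hkey : schemeTransp (rcomp (schemeTransp s) (schemeTransp t)) = rcomp t s := by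
    rw [transp_rcomp, transp_transp, transp_transp]
  have hmem : rcomp t s ∈ S.rels := by
    rw [← hkey]
    exact S.transpose_mem _ hm
  refine ⟨hmem, ?_, ?_⟩
  · ext u
    rw [cprod_transp_iff hv ht hs, hc]
    constructor
    · intro h
      have h2 : schemeTransp u = rcomp (schemeTransp s) (schemeTransp t) := h
      have := congrArg schemeTransp h2
      rwa [transp_transp, hkey] at this
    · rintro rfl
      rw [Set.mem_singleton_iff, ← hkey, transp_transp]
  · rw [← hkey, val_transp hm, hval, val_transp hs]

lemma cprod_nonempty {s t : Set (X × X)} (hs : s ∈ S.rels) (ht : t ∈ S.rels) :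
    (S.cprod s t).Nonempty := by
  obtain ⟨⟨x, z⟩, hx⟩ := rel_nonempty hv hs
  obtain ⟨y, hy⟩ := exists_out hv ht z
  refine ⟨S.relOf (x, y), relOf_mem _, ?_⟩
  rw [a_ne_zero_iff hs ht (relOf_mem _) (mem_relOf _)]
  exact ⟨z, hx, hy⟩

end hv

lemma a_le_val_right [Nonempty X] {s t u : Set (X × X)} (hs : s ∈ S.rels) (ht : t ∈ S.rels)
    (hu : u ∈ S.rels) {q : X × X} (hq : q ∈ u) : S.a s t u ≤ S.val t := by
  obtain ⟨x, y⟩ := q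
  rw [a_card hs ht hu hq, ← val_transp ht, val_card (S.transpose_mem t ht) y]
  exact natCard_le_of_imp fun z h => mem_transp.mpr h.2

lemma a_le_val_left {s t u : Set (X × X)} (hs : s ∈ S.rels) (ht : t ∈ S.rels)
    (hu : u ∈ S.rels) {q : X × X} (hq : q ∈ u) : S.a s t u ≤ S.val s := by
  obtain ⟨x, y⟩ := q
  rw [a_card hs ht hu hq, val_card hs x]
  exact natCard_le_of_imp fun z h => h.1

end AssocScheme
namespace AssocScheme

variable {X : Type*} [Fintype X] {S : AssocScheme X}

/-- The Finset of all relations. -/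
noncomputable def RF (S : AssocScheme X) : Finset (Set (X × X)) := Finset.univ.image S.relOf

section hv
variable [Nonempty X] (hv : ∀ s ∈ S.rels, 0 < S.val s)
include hv

lemma mem_RF {u : Set (X × X)} : u ∈ S.RF ↔ u ∈ S.rels := by
  constructor
  · intro h
    obtain ⟨q, _, rfl⟩ := Finset.mem_image.mp h
    exact relOf_mem q
  · intro hu
    obtain ⟨q, hq⟩ := rel_nonempty hv hu
    exact Finset.mem_image.mpr ⟨q, Finset.mem_univ q, relOf_eq hu hq⟩

lemma sum_a_val {s t : Set (X × X)} (hs : s ∈ S.rels) (ht : t ∈ S.rels) (x : X) :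
    ∑ u ∈ S.RF, S.a s t u * S.val u = S.val s * S.val t := by
  have hA : Nat.card {q : X × X | (x, q.1) ∈ s ∧ (q.1, q.2) ∈ t} = S.val s * S.val t := by
    rw [natCard_pairs_fst]
    have hz : ∀ z : X, Nat.card {y | (x, z) ∈ s ∧ (z, y) ∈ t}
        = if (x, z) ∈ s then S.val t else 0 := by
      intro z
      by_cases hzs : (x, z) ∈ s
      · rw [if_pos hzs]
        rw [natCard_congr (Q := fun y => (z, y) ∈ t) (fun y => by simp [hzs])]
        exact (val_card ht z).symm
      · rw [if_neg hzs]
        exact natCard_of_empty fun y hy => hzs hy.1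
    rw [Finset.sum_congr rfl fun z _ => hz z, Finset.sum_ite, Finset.sum_const,
      Finset.sum_const_zero, add_zero, smul_eq_mul]
    rw [← natCard_eq_filter, ← val_card hs x]
  have hB : Nat.card {q : X × X | (x, q.1) ∈ s ∧ (q.1, q.2) ∈ t}
      = ∑ u ∈ S.RF, S.a s t u * S.val u := by
    rw [natCard_pairs_key (fun q => (x, q.1) ∈ s ∧ (q.1, q.2) ∈ t)
      (fun q => S.relOf (x, q.2)) S.RF (fun q _ => (mem_RF hv).mpr (relOf_mem _))]
    refine Finset.sum_congr rfl fun u hu => ?_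
    have hurels : u ∈ S.rels := (mem_RF hv).mp hu
    rw [natCard_pairs_snd]
    have hy : ∀ y : X, Nat.card {z | ((x, z) ∈ s ∧ (z, y) ∈ t) ∧ S.relOf (x, (z, y).2) = u}
        = if (x, y) ∈ u then S.a s t u else 0 := by
      intro y
      by_cases hyu : (x, y) ∈ u
      · rw [if_pos hyu]
        rw [natCard_congr (Q := fun z => (x, z) ∈ s ∧ (z, y) ∈ t)
          (fun z => ⟨fun h => h.1, fun h => ⟨h, relOf_eq hurels hyu⟩⟩)]
        exact (a_card hs ht hurels hyu).symm
      · rw [if_neg hyu]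
        exact natCard_of_empty fun z hz => hyu (hz.2 ▸ mem_relOf (x, y))
    rw [Finset.sum_congr rfl fun y _ => hy y, Finset.sum_ite, Finset.sum_const,
      Finset.sum_const_zero, add_zero, smul_eq_mul]
    rw [← natCard_eq_filter, ← val_card hurels x, mul_comm]
  rw [← hB, hA]

lemma a_diag_left_ne_zero {s : Set (X × X)} (hs : s ∈ S.rels) :
    S.a (schemeDiag X) s s ≠ 0 := by
  obtain ⟨⟨x, y⟩, hq⟩ := rel_nonempty hv hs
  rw [a_ne_zero_iff S.diag_mem hs hs hq]
  exact ⟨x, rfl, hq⟩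

end hv

lemma thinResidue_sub_of {U : Set (Set (X × X))}
    (hU : S.IsClosedSubset U ∧ ∀ t ∈ S.rels, S.cprod (schemeTransp t) t ⊆ U) :
    S.thinResidue ⊆ U :=
  fun _ hu => Set.mem_sInter.mp hu U hU

lemma thinResidue_sub : S.thinResidue ⊆ S.rels :=
  thinResidue_sub_of ⟨⟨⟨schemeDiag X, S.diag_mem⟩, le_refl _, fun u _ v _ => fun _ hr => hr.1⟩,
    fun _ _ => fun _ hr => hr.1⟩

lemma cprod_transp_self_sub_thinResidue {s : Set (X × X)} (hs : s ∈ S.rels) :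
    S.cprod (schemeTransp s) s ⊆ S.thinResidue := by
  intro r hr
  rw [thinResidue, resOf, Set.mem_sInter]
  rintro U ⟨hU1, hU2⟩
  exact hU2 s hs hr

lemma thinResidue_closed {t t' : Set (X × X)} (ht : t ∈ S.thinResidue)
    (ht' : t' ∈ S.thinResidue) : S.cprod t t' ⊆ S.thinResidue := by
  intro r hr
  rw [thinResidue, resOf, Set.mem_sInter]
  rintro U hU
  exact hU.1.2.2 t (Set.mem_sInter.mp ht U hU) t' (Set.mem_sInter.mp ht' U hU) hr

section hv2
variable [Nonempty X] (hv : ∀ s ∈ S.rels, 0 < S.val s)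
include hv

lemma diag_mem_thinResidue : schemeDiag X ∈ S.thinResidue := by
  apply cprod_transp_self_sub_thinResidue S.diag_mem
  refine ⟨S.diag_mem, ?_⟩
  rw [transp_diag]
  exact a_diag_left_ne_zero hv S.diag_mem

lemma thinResidue_transp (hT1 : ∀ t ∈ S.thinResidue, S.val t = 1)
    {t : Set (X × X)} (ht : t ∈ S.thinResidue) : schemeTransp t ∈ S.thinResidue := by
  have htr : t ∈ S.rels := thinResidue_sub ht
  have ht1 : S.val t = 1 := hT1 t ht
  set TF := S.RF.filter (· ∈ S.thinResidue) with hTF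
  have hmaps : ∀ u ∈ TF, rcomp t u ∈ TF := by
    intro u hu
    rw [hTF, Finset.mem_filter] at hu
    have hur : u ∈ S.rels := (mem_RF hv).mp hu.1
    obtain ⟨hm, hc, _⟩ := thin_right hv htr hur (hT1 u hu.2)
    have : rcomp t u ∈ S.cprod t u := by rw [hc]; rfl
    have hmem := thinResidue_closed ht hu.2 this
    rw [hTF, Finset.mem_filter]
    exact ⟨(mem_RF hv).mpr hm, hmem⟩
  have hinj : ∀ u ∈ TF, ∀ u' ∈ TF, rcomp t u = rcomp t u' → u = u' := by
    intro u hu u' hu' heq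
    have key : ∀ w, rcomp (schemeTransp t) (rcomp t w) = w := by
      intro w
      rw [← rcomp_assoc, rcomp_transp_self hv htr ht1, rcomp_diag_left]
    rw [← key u, heq, key u']
  have himg : TF.image (rcomp t) = TF := by
    apply Finset.eq_of_subset_of_card_le
    · intro w hw
      obtain ⟨u, hu, rfl⟩ := Finset.mem_image.mp hw
      exact hmaps u hu
    · rw [Finset.card_image_of_injOn hinj]
  have hdiag : schemeDiag X ∈ TF := by
    rw [hTF, Finset.mem_filter]
    exact ⟨(mem_RF hv).mpr S.diag_mem, diag_mem_thinResidue hv⟩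
  rw [← himg] at hdiag
  obtain ⟨u, hu, hequ⟩ := Finset.mem_image.mp hdiag
  have : schemeTransp t = u := by
    calc schemeTransp t = rcomp (schemeTransp t) (schemeDiag X) := (rcomp_diag_right _).symm
      _ = rcomp (schemeTransp t) (rcomp t u) := by rw [hequ]
      _ = rcomp (rcomp (schemeTransp t) t) u := (rcomp_assoc _ _ _).symm
      _ = u := by rw [rcomp_transp_self hv htr ht1, rcomp_diag_left]
  rw [this]
  exact (Finset.mem_filter.mp hu).2

lemma card_TF {p : ℕ} (hpp : p.Prime) (f : Set (X × X) → ZMod p × ZMod p)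
    (hbij : Set.BijOn f S.thinResidue Set.univ) :
    (S.RF.filter (· ∈ S.thinResidue)).card = p * p := by
  haveI : NeZero p := ⟨hpp.ne_zero⟩
  have hcoe : (↑(S.RF.filter (· ∈ S.thinResidue)) : Set (Set (X × X))) = S.thinResidue := by
    ext u
    simp only [Finset.coe_filter, Set.mem_setOf_eq]
    exact ⟨fun h => h.2, fun h => ⟨(mem_RF hv).mpr (thinResidue_sub h), h⟩⟩
  have h1 : Nat.card S.thinResidue = (S.RF.filter (· ∈ S.thinResidue)).card := by
    conv_lhs => rw [← hcoe]
    rw [Nat.card_coe_set_eq, Set.ncard_coe_finset]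
  rw [← h1, Nat.card_congr (hbij.equiv f), Nat.card_coe_set_eq, Set.ncard_univ,
    Nat.card_eq_fintype_card, Fintype.card_prod, ZMod.card]

end hv2

end AssocScheme
namespace AssocScheme

variable {X : Type*} [Fintype X] {S : AssocScheme X}

lemma cprod_sub_rels (u v : Set (X × X)) : S.cprod u v ⊆ S.rels := fun _ hr => hr.1

lemma mem_cprod_of {u v : Set (X × X)} (hu : u ∈ S.rels) (hv' : v ∈ S.rels)
    {x y z : X} (h1 : (x, y) ∈ u) (h2 : (y, z) ∈ v) : S.relOf (x, z) ∈ S.cprod u v :=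
  ⟨relOf_mem _, (a_ne_zero_iff hu hv' (relOf_mem _) (mem_relOf _)).mpr ⟨y, h1, h2⟩⟩

lemma card_dvd_of_partition (c : X → Finset X) (hself : ∀ x, x ∈ c x)
    (heq : ∀ x y, y ∈ c x → c x = c y) (n : ℕ) (hn : ∀ x, (c x).card = n) :
    Fintype.card X = (Finset.univ.image c).card * n := by
  have key : ∀ B ∈ Finset.univ.image c, (Finset.univ.filter fun y => c y = B).card = n := by
    intro B hB
    obtain ⟨x, _, rfl⟩ := Finset.mem_image.mp hB
    have hfix : (Finset.univ.filter fun y => c y = c x) = c x := by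
      ext y
      simp only [Finset.mem_filter, Finset.mem_univ, true_and]
      constructor
      · intro h
        exact h ▸ hself y
      · intro hy
        exact (heq x y hy).symm
    rw [hfix, hn]
  rw [← Finset.card_univ, Finset.card_eq_sum_card_fiberwise (f := c)
    (t := Finset.univ.image c) (fun x _ => Finset.mem_image_of_mem c (Finset.mem_univ x))]
  rw [Finset.sum_congr rfl key, Finset.sum_const, smul_eq_mul]

/-- The block of `x` relative to a set `U` of relations. -/
noncomputable def blockOf (S : AssocScheme X) (U : Set (Set (X × X))) (x : X) : Finset X :=
  Finset.univ.filter fun y => S.relOf (x, y) ∈ U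

lemma mem_blockOf {U : Set (Set (X × X))} {x y : X} :
    y ∈ S.blockOf U x ↔ S.relOf (x, y) ∈ U := by
  simp [blockOf]

section Ublock
variable {U : Set (Set (X × X))} (hUsub : U ⊆ S.rels)
  (hUt : ∀ u ∈ U, schemeTransp u ∈ U)
  (hUc : ∀ u ∈ U, ∀ v ∈ U, S.cprod u v ⊆ U)
  (hUd : schemeDiag X ∈ U)

lemma blockOf_self (hUd : schemeDiag X ∈ U) (x : X) : x ∈ S.blockOf U x := by
  rw [mem_blockOf, relOf_eq S.diag_mem (show (x, x) ∈ schemeDiag X from rfl)]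
  exact hUd

lemma relOf_swap (x y : X) : S.relOf (y, x) = schemeTransp (S.relOf (x, y)) :=
  relOf_eq (S.transpose_mem _ (relOf_mem _)) (mem_transp.mpr (mem_relOf _))

include hUt in
lemma blockOf_symm {x y : X} (h : y ∈ S.blockOf U x) : x ∈ S.blockOf U y := by
  rw [mem_blockOf] at h ⊢
  rw [relOf_swap]
  exact hUt _ h

include hUsub hUt hUc in
lemma blockOf_eq {x y : X} (h : y ∈ S.blockOf U x) : S.blockOf U x = S.blockOf U y := by
  have hyx : S.relOf (y, x) ∈ U := by
    rw [relOf_swap]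
    exact hUt _ (mem_blockOf.mp h)
  ext z
  rw [mem_blockOf, mem_blockOf]
  constructor
  · intro hz
    have := mem_cprod_of (S := S) (hUsub hyx) (hUsub hz) (mem_relOf (y, x)) (mem_relOf (x, z))
    exact hUc _ hyx _ hz this
  · intro hz
    have := mem_cprod_of (S := S) (hUsub (mem_blockOf.mp h)) (hUsub hz)
      (mem_relOf (x, y)) (mem_relOf (y, z))
    exact hUc _ (mem_blockOf.mp h) _ hz this

variable [Nonempty X] (hv : ∀ s ∈ S.rels, 0 < S.val s)

include hUsub hv in
lemma blockOf_card (x : X) :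
    (S.blockOf U x).card = ∑ u ∈ S.RF.filter (· ∈ U), S.val u := by
  rw [Finset.card_eq_sum_card_fiberwise (f := fun y => S.relOf (x, y))
    (t := S.RF.filter (· ∈ U)) (fun y hy => by
      rw [Finset.mem_coe, Finset.mem_filter]
      exact ⟨(mem_RF hv).mpr (hUsub (mem_blockOf.mp hy)), mem_blockOf.mp hy⟩)]
  refine Finset.sum_congr rfl fun u hu => ?_
  have huU : u ∈ U := (Finset.mem_filter.mp hu).2
  have hurels : u ∈ S.rels := hUsub huU
  have hset : ((S.blockOf U x).filter fun y => S.relOf (x, y) = u)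
      = Finset.univ.filter fun y => (x, y) ∈ u := by
    ext y
    simp only [Finset.mem_filter, Finset.mem_univ, true_and, mem_blockOf]
    constructor
    · rintro ⟨-, rfl⟩
      exact mem_relOf _
    · intro hy
      have := relOf_eq hurels hy
      exact ⟨this ▸ huU, this⟩
  rw [hset, ← natCard_eq_filter, ← val_card hurels x]

include hUsub hUt hUc hUd hv in
lemma blockOf_dvd :
    Fintype.card X = (Finset.univ.image (S.blockOf U)).card
      * ∑ u ∈ S.RF.filter (· ∈ U), S.val u := by
  refine card_dvd_of_partition _ (blockOf_self hUd) (fun x y h => blockOf_eq hUsub hUt hUc h)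
    _ (fun x => blockOf_card hUsub hv x)

include hUsub hUt hUc hUd hv in
lemma blockOf_all (htot : ∑ u ∈ S.RF.filter (· ∈ U), S.val u = Fintype.card X)
    (x y : X) : S.relOf (x, y) ∈ U := by
  have hcard : (S.blockOf U x).card = Fintype.card X := by
    rw [blockOf_card hUsub hv x, htot]
  have : S.blockOf U x = Finset.univ := by
    exact Finset.eq_univ_of_card _ hcard
  rw [← mem_blockOf, this]
  exact Finset.mem_univ y

end Ublock

end AssocScheme
namespace AssocScheme

variable {X : Type*} [Fintype X]

/-- Relations generated by the thin residue together with `s0`. -/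
inductive Hrel (S : AssocScheme X) (s0 : Set (X × X)) : Set (X × X) → Prop
  | base {t} (h : t ∈ S.thinResidue) : Hrel S s0 t
  | base_s : Hrel S s0 s0
  | base_st : Hrel S s0 (schemeTransp s0)
  | mul {u v w} (hu : Hrel S s0 u) (hv : Hrel S s0 v) (hw : w ∈ S.cprod u v) : Hrel S s0 w

variable {S : AssocScheme X}

lemma Hrel_sub {s0 : Set (X × X)} (hs0 : s0 ∈ S.rels) {v : Set (X × X)}
    (h : Hrel S s0 v) : v ∈ S.rels := by
  induction h with
  | base h => exact thinResidue_sub h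
  | base_s => exact hs0
  | base_st => exact S.transpose_mem _ hs0
  | mul hu hv hw ihu ihv => exact hw.1

section fwd
variable [Nonempty X] (hv : ∀ s ∈ S.rels, 0 < S.val s)
  (hT1 : ∀ t ∈ S.thinResidue, S.val t = 1)
include hv

include hT1 in
lemma Hrel_transp {s0 : Set (X × X)} (hs0 : s0 ∈ S.rels) {v : Set (X × X)}
    (h : Hrel S s0 v) : Hrel S s0 (schemeTransp v) := by
  induction h with
  | base h => exact Hrel.base (thinResidue_transp hv hT1 h)
  | base_s => exact Hrel.base_st
  | base_st => rw [transp_transp]; exact Hrel.base_s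
  | mul hu hvr hw ihu ihv =>
    exact Hrel.mul ihv ihu ((cprod_transp_iff hv (Hrel_sub hs0 hu) (Hrel_sub hs0 hvr)).mp hw)

include hT1 in
lemma Hrel_all {p : ℕ} (hp : S.IsPScheme p) (hcard : Fintype.card X = p ^ 3)
    (hTcard : (S.RF.filter (· ∈ S.thinResidue)).card = p * p)
    {s0 : Set (X × X)} (hs0 : s0 ∈ S.rels) (hs0n : s0 ∉ S.thinResidue)
    {v : Set (X × X)} (hvr : v ∈ S.rels) : Hrel S s0 v := by
  set Hs : Set (Set (X × X)) := {w | Hrel S s0 w} with hHs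
  have hUsub : Hs ⊆ S.rels := fun w hw => Hrel_sub hs0 hw
  have hUt : ∀ u ∈ Hs, schemeTransp u ∈ Hs := fun u hu => Hrel_transp hv hT1 hs0 hu
  have hUc : ∀ u ∈ Hs, ∀ w ∈ Hs, S.cprod u w ⊆ Hs :=
    fun u hu w hw r hr => Hrel.mul hu hw hr
  have hUd : schemeDiag X ∈ Hs := Hrel.base (diag_mem_thinResidue hv)
  have hdvd := blockOf_dvd hUsub hUt hUc hUd hv
  set nH := ∑ u ∈ S.RF.filter (· ∈ Hs), S.val u with hnH
  have hge : p * p + 1 ≤ nH := by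
    have hsub : insert s0 (S.RF.filter (· ∈ S.thinResidue)) ⊆ S.RF.filter (· ∈ Hs) := by
      intro u hu
      rcases Finset.mem_insert.mp hu with rfl | hu
      · exact Finset.mem_filter.mpr ⟨(mem_RF hv).mpr hs0, Hrel.base_s⟩
      · obtain ⟨h1, h2⟩ := Finset.mem_filter.mp hu
        exact Finset.mem_filter.mpr ⟨h1, Hrel.base h2⟩
    have hle := Finset.sum_le_sum_of_subset (f := S.val) hsub
    have hs0nt : s0 ∉ S.RF.filter (· ∈ S.thinResidue) := by
      intro h
      exact hs0n (Finset.mem_filter.mp h).2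
    rw [Finset.sum_insert hs0nt] at hle
    have hTsum : ∑ u ∈ S.RF.filter (· ∈ S.thinResidue), S.val u
        = (S.RF.filter (· ∈ S.thinResidue)).card := by
      rw [Finset.sum_congr rfl fun u hu => hT1 u (Finset.mem_filter.mp hu).2]
      simp
    rw [hTsum, hTcard] at hle
    have := hv s0 hs0
    omega
  have hdvd2 : nH ∣ p ^ 3 := by
    rw [← hcard]
    exact ⟨_, by rw [hdvd, mul_comm]⟩
  obtain ⟨i, hile, hieq⟩ := (Nat.dvd_prime_pow hp.1).mp hdvd2
  have hp1 : 1 < p := hp.1.one_lt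
  have hi3 : i = 3 := by
    rcases Nat.lt_or_ge i 3 with h | h
    · exfalso
      have : nH ≤ p ^ 2 := by
        rw [hieq]
        exact Nat.pow_le_pow_right (le_of_lt hp1) (by omega)
      have hpp : p * p = p ^ 2 := by ring
      omega
    · omega
  have htot : nH = Fintype.card X := by rw [hieq, hi3, hcard]
  have htot2 : ∑ u ∈ S.RF.filter (· ∈ Hs), S.val u = Fintype.card X := by
    rw [← hnH]; exact htot
  have := blockOf_all hUsub hUt hUc hUd hv htot2
  obtain ⟨q, hq⟩ := rel_nonempty hv hvr
  have : S.relOf q ∈ Hs := this q.1 q.2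
  rwa [relOf_eq hvr hq] at this

omit hv in
lemma cprod_comm (hcomm : S.IsCommutative) {u v : Set (X × X)} (hu : u ∈ S.rels)
    (hvr : v ∈ S.rels) : S.cprod u v = S.cprod v u := by
  ext r
  constructor
  · rintro ⟨hr, ha⟩
    exact ⟨hr, by rwa [← hcomm u hu v hvr r hr]⟩
  · rintro ⟨hr, ha⟩
    exact ⟨hr, by rwa [hcomm u hu v hvr r hr]⟩

lemma comm_rcomp (hcomm : S.IsCommutative) {b u : Set (X × X)} (hu : u ∈ S.rels)
    (hb : b ∈ S.rels) (hb1 : S.val b = 1) : rcomp u b = rcomp b u := by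
  have h1 := (thin_right hv hu hb hb1).2.1
  have h2 := (thin_left hv hu hb hb1).2.1
  have h3 : S.cprod u b = S.cprod b u := cprod_comm hcomm hu hb
  have : rcomp u b ∈ ({rcomp b u} : Set (Set (X × X))) := by
    rw [← h2, ← h3, h1]
    rfl
  exact this

include hT1 in
lemma stab_of_residue {s t : Set (X × X)} (hs : s ∈ S.rels)
    (h : t ∈ S.cprod (schemeTransp s) s) : rcomp s t = s := by
  have htT : t ∈ S.thinResidue := cprod_transp_self_sub_thinResidue hs h
  have htr : t ∈ S.rels := thinResidue_sub htT
  have ht1 : S.val t = 1 := hT1 t htT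
  obtain ⟨⟨x, y⟩, hxy⟩ := rel_nonempty hv htr
  obtain ⟨z, hz1, hz2⟩ := (a_ne_zero_iff (S.transpose_mem s hs) hs htr hxy).mp h.2
  have hzx : (z, x) ∈ s := mem_transp.mp hz1
  have h1 : (z, y) ∈ rcomp s t := ⟨x, hzx, hxy⟩
  have hmem : rcomp s t ∈ S.rels := (thin_right hv hs htr ht1).1
  exact rels_eq hmem hs h1 hz2

include hT1 in
lemma forward_P (hcomm : S.IsCommutative) {s0 : Set (X × X)} (hs0 : s0 ∈ S.rels)
    {w : Set (X × X)} (hw : Hrel S s0 w) :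
    S.cprod (schemeTransp w) w ⊆
      {t | t ∈ S.thinResidue ∧ rcomp s0 t = s0} := by
  have hdiagA : schemeDiag X ∈ {t | t ∈ S.thinResidue ∧ rcomp s0 t = s0} :=
    ⟨diag_mem_thinResidue hv, rcomp_diag_right s0⟩
  induction hw with
  | base h =>
    rename_i t'
    intro r hr
    have ht'r : t' ∈ S.rels := thinResidue_sub h
    have hrr : r ∈ S.rels := hr.1
    obtain ⟨⟨x, y⟩, hxy⟩ := rel_nonempty hv hrr
    obtain ⟨z, hz1, hz2⟩ := (a_ne_zero_iff (S.transpose_mem _ ht'r) ht'r hrr hxy).mp hr.2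
    have hxe : x = y := thin_out_unique ht'r (hT1 t' h) (mem_transp.mp hz1) hz2
    subst hxe
    have : r = schemeDiag X := rels_eq hrr S.diag_mem hxy rfl
    rw [this]
    exact hdiagA
  | base_s =>
    intro r hr
    exact ⟨cprod_transp_self_sub_thinResidue hs0 hr, stab_of_residue hv hT1 hs0 hr⟩
  | base_st =>
    intro r hr
    have hrT : r ∈ S.thinResidue :=
      cprod_transp_self_sub_thinResidue (S.transpose_mem _ hs0) hr
    have hrr : r ∈ S.rels := thinResidue_sub hrT
    have hr1 : S.val r = 1 := hT1 r hrT
    refine ⟨hrT, ?_⟩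
    have h1 : rcomp (schemeTransp s0) r = schemeTransp s0 :=
      stab_of_residue hv hT1 (S.transpose_mem _ hs0) hr
    have h2 : rcomp (schemeTransp r) s0 = s0 := by
      have := congrArg schemeTransp h1
      rwa [transp_rcomp, transp_transp] at this
    have h3 : rcomp s0 (schemeTransp r) = s0 := by
      rw [comm_rcomp hv hcomm hs0 (S.transpose_mem _ hrr) ((val_transp hrr).trans hr1)]
      exact h2
    calc rcomp s0 r = rcomp (rcomp s0 (schemeTransp r)) r := by rw [h3]
      _ = rcomp s0 (rcomp (schemeTransp r) r) := rcomp_assoc _ _ _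
      _ = rcomp s0 (schemeDiag X) := by rw [rcomp_transp_self hv hrr hr1]
      _ = s0 := rcomp_diag_right s0
  | mul hu hvr hw ihu ihv =>
    rename_i u v w'
    intro t ht
    have hw'r : w' ∈ S.rels := hw.1
    have hu' : u ∈ S.rels := Hrel_sub hs0 hu
    have hv' : v ∈ S.rels := Hrel_sub hs0 hvr
    have htT : t ∈ S.thinResidue := cprod_transp_self_sub_thinResidue hw'r ht
    have htr : t ∈ S.rels := thinResidue_sub htT
    have ht1 : S.val t = 1 := hT1 t htT
    obtain ⟨⟨x, y⟩, hxy⟩ := rel_nonempty hv htr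
    obtain ⟨z, hz1, hz2⟩ := (a_ne_zero_iff (S.transpose_mem _ hw'r) hw'r htr hxy).mp ht.2
    have hzx : (z, x) ∈ w' := mem_transp.mp hz1
    obtain ⟨m, hm1, hm2⟩ := (a_ne_zero_iff hu' hv' hw'r hzx).mp hw.2
    obtain ⟨n, hn1, hn2⟩ := (a_ne_zero_iff hu' hv' hw'r hz2).mp hw.2
    set t1 := S.relOf (m, n) with ht1def
    have ht1c : t1 ∈ S.cprod (schemeTransp u) u :=
      mem_cprod_of (S.transpose_mem _ hu') hu' (mem_transp.mpr hm1) hn1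
    obtain ⟨ht1T, ht1s⟩ := ihu ht1c
    have ht1r : t1 ∈ S.rels := thinResidue_sub ht1T
    have ht11 : S.val t1 = 1 := hT1 t1 ht1T
    have hmn : (m, n) ∈ t1 := mem_relOf _
    obtain ⟨x1, hx1⟩ := exists_out hv ht1r x
    have hnx1 : (n, x1) ∈ v := by
      have hmx1 : (m, x1) ∈ rcomp v t1 := ⟨x, hm2, hx1⟩
      rw [comm_rcomp hv hcomm hv' ht1r ht11] at hmx1
      obtain ⟨γ, hγ1, hγ2⟩ := hmx1
      have : n = γ := thin_out_unique ht1r ht11 hmn hγ1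
      rwa [← this] at hγ2
    set t2 := rcomp (schemeTransp t1) t with ht2def
    have ht2r : t2 ∈ S.rels :=
      (thin_left hv htr (S.transpose_mem _ ht1r) ((val_transp ht1r).trans ht11)).1
    have hx1y : (x1, y) ∈ t2 := ⟨x, mem_transp.mpr hx1, hxy⟩
    have ht2c : t2 ∈ S.cprod (schemeTransp v) v := by
      refine ⟨ht2r, ?_⟩
      rw [a_ne_zero_iff (S.transpose_mem _ hv') hv' ht2r hx1y]
      exact ⟨n, mem_transp.mpr hnx1, hn2⟩
    obtain ⟨ht2T, ht2s⟩ := ihv ht2c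
    have hteq : t = rcomp t1 t2 := by
      rw [ht2def, ← rcomp_assoc, rcomp_self_transp hv ht1r ht11, rcomp_diag_left]
    refine ⟨htT, ?_⟩
    rw [hteq, ← rcomp_assoc, ht1s, ht2s]

include hT1 in
lemma forward_dir (hcomm : S.IsCommutative) {p : ℕ} (hp : S.IsPScheme p)
    (hcard : Fintype.card X = p ^ 3)
    (hTcard : (S.RF.filter (· ∈ S.thinResidue)).card = p * p)
    {s0 : Set (X × X)} (hs0 : s0 ∈ S.rels) (hs0n : s0 ∉ S.thinResidue) :
    S.sprod S.thinResidue {s0} = {s0} := by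
  set A : Set (Set (X × X)) := {t | t ∈ S.thinResidue ∧ rcomp s0 t = s0} with hA
  have hTA : S.thinResidue ⊆ A := by
    apply thinResidue_sub_of
    constructor
    · refine ⟨⟨schemeDiag X, diag_mem_thinResidue hv, rcomp_diag_right s0⟩, ?_, ?_⟩
      · exact fun t ht => thinResidue_sub ht.1
      · intro t ht t' ht' r hr
        have htr : t ∈ S.rels := thinResidue_sub ht.1
        have ht'r : t' ∈ S.rels := thinResidue_sub ht'.1
        have := (thin_right hv htr ht'r (hT1 t' ht'.1)).2.1
        rw [this] at hr
        have hreq : r = rcomp t t' := hr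
        rw [hreq]
        constructor
        · refine thinResidue_closed ht.1 ht'.1 ?_
          rw [this]
          rfl
        · rw [← rcomp_assoc, ht.2, ht'.2]
    · intro w hwr
      exact forward_P hv hT1 hcomm hs0 (Hrel_all hv hT1 hp hcard hTcard hs0 hs0n hwr)
  ext r
  constructor
  · rintro ⟨hr, t, htT, q', hq', ha⟩
    rw [Set.mem_singleton_iff] at hq'
    rw [hq'] at ha
    have htr : t ∈ S.rels := thinResidue_sub htT
    have ht1 : S.val t = 1 := hT1 t htT
    have : r ∈ S.cprod t s0 := ⟨hr, ha⟩
    rw [(thin_left hv hs0 htr ht1).2.1] at this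
    have hreq : r = rcomp t s0 := this
    rw [hreq, ← comm_rcomp hv hcomm hs0 htr ht1]
    exact (hTA htT).2
  · intro hr
    have hreq : r = s0 := hr
    subst hreq
    exact ⟨hs0, schemeDiag X, diag_mem_thinResidue hv, r, rfl, a_diag_left_ne_zero hv hs0⟩

end fwd

end AssocScheme
namespace AssocScheme

variable {X : Type*} [Fintype X] {S : AssocScheme X}

/-- `x` and `y` are in the same thin-residue block. -/
def sim (S : AssocScheme X) (x y : X) : Prop := S.relOf (x, y) ∈ S.thinResidue

section bk
variable [Nonempty X] (hv : ∀ s ∈ S.rels, 0 < S.val s)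
  (hT1 : ∀ t ∈ S.thinResidue, S.val t = 1)
include hv

lemma sim_refl (x : X) : S.sim x x := by
  unfold sim
  rw [relOf_eq S.diag_mem (show (x, x) ∈ schemeDiag X from rfl)]
  exact diag_mem_thinResidue hv

include hT1 in
lemma sim_symm {x y : X} (h : S.sim x y) : S.sim y x := by
  unfold sim at h ⊢
  rw [relOf_swap]
  exact thinResidue_transp hv hT1 h

omit hv in
lemma sim_trans {x y z : X} (h1 : S.sim x y) (h2 : S.sim y z) : S.sim x z :=
  thinResidue_closed h1 h2
    (mem_cprod_of (thinResidue_sub h1) (thinResidue_sub h2) (mem_relOf _) (mem_relOf _))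

omit hv in
lemma transp_notin {s : Set (X × X)} (hs : s ∈ S.rels) (hsn : s ∉ S.thinResidue)
    (hvv : ∀ s ∈ S.rels, 0 < S.val s) (h1 : ∀ t ∈ S.thinResidue, S.val t = 1) :
    schemeTransp s ∉ S.thinResidue := by
  intro h
  have := thinResidue_transp hvv h1 h
  rw [transp_transp] at this
  exact hsn this

variable (hR : ∀ s ∈ S.rels, s ∉ S.thinResidue → S.sprod S.thinResidue {s} = {s})
include hR hT1

lemma bk_left {s t : Set (X × X)} (hs : s ∈ S.rels) (hsn : s ∉ S.thinResidue)
    (htT : t ∈ S.thinResidue) : rcomp t s = s := by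
  have htr : t ∈ S.rels := thinResidue_sub htT
  have ht1 : S.val t = 1 := hT1 t htT
  have hc := (thin_left hv hs htr ht1).2.1
  have hmem : rcomp t s ∈ S.cprod t s := by rw [hc]; rfl
  have : rcomp t s ∈ S.sprod S.thinResidue {s} :=
    ⟨hmem.1, t, htT, s, rfl, hmem.2⟩
  rw [hR s hs hsn] at this
  exact this

lemma bk_right {s t : Set (X × X)} (hs : s ∈ S.rels) (hsn : s ∉ S.thinResidue)
    (htT : t ∈ S.thinResidue) : rcomp s t = s := by
  have h1 : rcomp (schemeTransp t) (schemeTransp s) = schemeTransp s :=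
    bk_left hv hT1 hR (S.transpose_mem s hs) (transp_notin hs hsn hv hT1)
      (thinResidue_transp hv hT1 htT)
  have := congrArg schemeTransp h1
  rwa [transp_rcomp, transp_transp, transp_transp] at this

lemma row_block {s : Set (X × X)} (hs : s ∈ S.rels) (hsn : s ∉ S.thinResidue)
    {x y : X} (hxy : (x, y) ∈ s) (z : X) : (x, z) ∈ s ↔ S.sim y z := by
  constructor
  · intro hz
    exact cprod_transp_self_sub_thinResidue hs
      (mem_cprod_of (S.transpose_mem s hs) hs (mem_transp.mpr hxy) hz)
  · intro hsim
    have : (x, z) ∈ rcomp s (S.relOf (y, z)) := ⟨y, hxy, mem_relOf _⟩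
    rwa [bk_right hv hT1 hR hs hsn hsim] at this

lemma col_block {s : Set (X × X)} (hs : s ∈ S.rels) (hsn : s ∉ S.thinResidue)
    {x y : X} (hxy : (x, y) ∈ s) (z : X) : (z, y) ∈ s ↔ S.sim x z := by
  have := row_block hv hT1 hR (S.transpose_mem s hs) (transp_notin hs hsn hv hT1)
    (mem_transp.mpr hxy) z
  rw [← this]
  exact Iff.rfl

lemma right_const {s : Set (X × X)} (hs : s ∈ S.rels) (hsn : s ∉ S.thinResidue)
    {x y y' : X} (hxy : (x, y) ∈ s) (h : S.sim y y') : (x, y') ∈ s :=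
  (row_block hv hT1 hR hs hsn hxy y').mpr h

lemma left_const {s : Set (X × X)} (hs : s ∈ S.rels) (hsn : s ∉ S.thinResidue)
    {x x' y : X} (hxy : (x, y) ∈ s) (h : S.sim x x') : (x', y) ∈ s :=
  (col_block hv hT1 hR hs hsn hxy x').mpr h

/-- The valency of a relation outside the thin residue equals `n_T`. -/
lemma val_out {s : Set (X × X)} (hs : s ∈ S.rels) (hsn : s ∉ S.thinResidue) :
    S.val s = ∑ u ∈ S.RF.filter (· ∈ S.thinResidue), S.val u := by
  obtain ⟨⟨x0, y0⟩, h0⟩ := rel_nonempty hv hs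
  rw [val_card hs x0, ← blockOf_card thinResidue_sub hv y0, natCard_eq_filter]
  congr 1
  ext z
  rw [mem_blockOf]
  simp only [Finset.mem_filter, Finset.mem_univ, true_and]
  exact row_block hv hT1 hR hs hsn h0 z

lemma a_blocked {u v r : Set (X × X)} (hu : u ∈ S.rels) (hun : u ∉ S.thinResidue)
    (hvr : v ∈ S.rels) (hvn : v ∉ S.thinResidue) (hr : r ∈ S.rels)
    {x y : X} (hxy : (x, y) ∈ r) :
    S.a u v r = if ∃ z, (x, z) ∈ u ∧ (z, y) ∈ v then S.val u else 0 := by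
  rw [a_card hu hvr hr hxy]
  by_cases hex : ∃ z, (x, z) ∈ u ∧ (z, y) ∈ v
  · rw [if_pos hex]
    obtain ⟨z0, hz01, hz02⟩ := hex
    rw [natCard_congr (Q := fun z => (x, z) ∈ u) (fun z => ?_), ← val_card hu x]
    constructor
    · exact fun h => h.1
    · intro h
      refine ⟨h, ?_⟩
      have hzz0 : S.sim z0 z := (row_block hv hT1 hR hu hun hz01 z).mp h
      exact left_const hv hT1 hR hvr hvn hz02 hzz0
  · rw [if_neg hex]
    exact natCard_of_empty fun z hz => hex ⟨z, hz⟩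

omit hR hT1 in
lemma nT_pos : 0 < ∑ u ∈ S.RF.filter (· ∈ S.thinResidue), S.val u := by
  classical
  have : schemeDiag X ∈ S.RF.filter (· ∈ S.thinResidue) :=
    Finset.mem_filter.mpr ⟨(mem_RF hv).mpr S.diag_mem, diag_mem_thinResidue hv⟩
  refine Finset.sum_pos' (fun i _ => Nat.zero_le _) ⟨_, this, hv _ S.diag_mem⟩

lemma trichotomy {u v : Set (X × X)} (hu : u ∈ S.rels) (hun : u ∉ S.thinResidue)
    (hvr : v ∈ S.rels) (hvn : v ∉ S.thinResidue) :
    (S.cprod u v ⊆ S.thinResidue) ∨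
      (∃ w, w ∈ S.rels ∧ w ∉ S.thinResidue ∧ S.cprod u v = {w}) := by
  set nT := ∑ u ∈ S.RF.filter (· ∈ S.thinResidue), S.val u with hnT
  have hnTpos : 0 < nT := nT_pos hv
  obtain ⟨⟨x0, z0⟩, h0⟩ := rel_nonempty hv hu
  have hsum := sum_a_val hv hu hvr x0
  rw [val_out hv hT1 hR hu hun, val_out hv hT1 hR hvr hvn, ← hnT] at hsum
  have hterm : ∀ r ∈ S.cprod u v, S.a u v r = nT := by
    intro r hrc
    obtain ⟨q, hq⟩ := rel_nonempty hv hrc.1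
    have := a_blocked hv hT1 hR hu hun hvr hvn hrc.1 hq
    rw [val_out hv hT1 hR hu hun, ← hnT] at this
    rcases Classical.em (∃ z, (q.1, z) ∈ u ∧ (z, q.2) ∈ v) with hex | hex
    · rwa [if_pos hex] at this
    · exfalso
      apply hrc.2
      rw [this, if_neg hex]
  by_cases hcase : ∃ r, r ∈ S.cprod u v ∧ r ∈ S.thinResidue
  · left
    obtain ⟨r0, hr0c, hr0T⟩ := hcase
    intro r1 hr1c
    by_contra hr1T
    have hne : r0 ≠ r1 := fun h => hr1T (h ▸ hr0T)
    have hsub : ({r0, r1} : Finset (Set (X × X))) ⊆ S.RF := by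
      intro r hr
      rcases Finset.mem_insert.mp hr with rfl | hr
      · exact (mem_RF hv).mpr hr0c.1
      · rw [Finset.mem_singleton.mp hr]
        exact (mem_RF hv).mpr hr1c.1
    have hle := Finset.sum_le_sum_of_subset (f := fun r => S.a u v r * S.val r) hsub
    rw [Finset.sum_pair hne] at hle
    rw [hsum] at hle
    have e0 : S.a u v r0 * S.val r0 = nT := by
      rw [hterm r0 hr0c, hT1 r0 hr0T, mul_one]
    have e1 : S.a u v r1 * S.val r1 = nT * nT := by
      rw [hterm r1 hr1c, val_out hv hT1 hR hr1c.1 hr1T, ← hnT]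
    nlinarith
  · right
    push_neg at hcase
    obtain ⟨w, hw⟩ := cprod_nonempty hv hu hvr
    refine ⟨w, hw.1, hcase w hw, ?_⟩
    apply Set.eq_singleton_iff_unique_mem.mpr
    refine ⟨hw, ?_⟩
    intro r1 hr1
    by_contra hne
    have hsub : ({w, r1} : Finset (Set (X × X))) ⊆ S.RF := by
      intro r hr
      rcases Finset.mem_insert.mp hr with rfl | hr
      · exact (mem_RF hv).mpr hw.1
      · rw [Finset.mem_singleton.mp hr]
        exact (mem_RF hv).mpr hr1.1
    have hle := Finset.sum_le_sum_of_subset (f := fun r => S.a u v r * S.val r) hsub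
    rw [Finset.sum_pair (fun h => hne h.symm)] at hle
    rw [hsum] at hle
    have e0 : S.a u v w * S.val w = nT * nT := by
      rw [hterm w hw, val_out hv hT1 hR hw.1 (hcase w hw), ← hnT]
    have e1 : S.a u v r1 * S.val r1 = nT * nT := by
      rw [hterm r1 hr1, val_out hv hT1 hR hr1.1 (hcase r1 hr1), ← hnT]
    nlinarith

end bk

end AssocScheme
namespace AssocScheme

variable {X : Type*} [Fintype X] {S : AssocScheme X}

/-- `reachN u m x y`: there is a `u`-walk of length `m` from `x` to `y`. -/
def reachN (u : Set (X × X)) : ℕ → X → X → Prop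
  | 0, x, y => x = y
  | m + 1, x, y => ∃ z, reachN u m x z ∧ (z, y) ∈ u

lemma reach_one {u : Set (X × X)} {x y : X} : reachN u 1 x y ↔ (x, y) ∈ u := by
  constructor
  · rintro ⟨z, hz, h⟩
    have : x = z := hz
    exact this ▸ h
  · intro h
    exact ⟨x, rfl, h⟩

lemma reach_add (u : Set (X × X)) (m k : ℕ) (x y : X) :
    reachN u (m + k) x y ↔ ∃ z, reachN u m x z ∧ reachN u k z y := by
  induction k generalizing y with
  | zero =>
    constructor
    · intro h
      exact ⟨y, h, rfl⟩
    · rintro ⟨z, h, hz⟩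
      have : z = y := hz
      exact this ▸ h
  | succ k ih =>
    constructor
    · rintro ⟨w, hw, hstep⟩
      obtain ⟨z, hz1, hz2⟩ := (ih _).mp hw
      exact ⟨z, hz1, w, hz2, hstep⟩
    · rintro ⟨z, hz1, w, hz2, hstep⟩
      exact ⟨w, (ih _).mpr ⟨z, hz1, hz2⟩, hstep⟩

/-- A choice of `u`-successor. -/
noncomputable def stepf (u : Set (X × X)) (x : X) : X :=
  if h : ∃ y, (x, y) ∈ u then h.choose else x

/-- The canonical `u`-walk starting at `x`. -/
noncomputable def zseq (u : Set (X × X)) (x : X) (k : ℕ) : X := (stepf u)^[k] x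

lemma zseq_segment (u : Set (X × X)) (x : X) (i k : ℕ) :
    zseq u x (i + k) = zseq u (zseq u x i) k := by
  unfold zseq
  rw [add_comm, Function.iterate_add_apply]

section reach
variable [Nonempty X] (hv : ∀ s ∈ S.rels, 0 < S.val s)
include hv

lemma stepf_mem {u : Set (X × X)} (hu : u ∈ S.rels) (x : X) : (x, stepf u x) ∈ u := by
  unfold stepf
  rw [dif_pos (exists_out hv hu x)]
  exact (exists_out hv hu x).choose_spec

lemma reach_zseq {u : Set (X × X)} (hu : u ∈ S.rels) (k : ℕ) (x : X) :
    reachN u k x (zseq u x k) := by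
  induction k with
  | zero => rfl
  | succ k ih =>
    refine ⟨zseq u x k, ih, ?_⟩
    have : zseq u x (k + 1) = stepf u (zseq u x k) := Function.iterate_succ_apply' _ _ _
    rw [this]
    exact stepf_mem hv hu _

lemma reach_seg {u : Set (X × X)} (hu : u ∈ S.rels) (i k : ℕ) (x : X) :
    reachN u k (zseq u x i) (zseq u x (i + k)) := by
  rw [zseq_segment]
  exact reach_zseq hv hu k _

lemma reach_exists {u : Set (X × X)} (hu : u ∈ S.rels) (m : ℕ) (x : X) :
    ∃ y, reachN u m x y :=
  ⟨zseq u x m, reach_zseq hv hu m x⟩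

variable (hT1 : ∀ t ∈ S.thinResidue, S.val t = 1)
  (hR : ∀ s ∈ S.rels, s ∉ S.thinResidue → S.sprod S.thinResidue {s} = {s})
include hT1 hR

lemma reach_congr {u : Set (X × X)} (hu : u ∈ S.rels) (hun : u ∉ S.thinResidue)
    (m : ℕ) : ∀ {x x' y y' : X}, S.sim x x' → reachN u m x y → reachN u m x' y' →
      S.sim y y' := by
  induction m with
  | zero =>
    intro x x' y y' hs h1 h2
    have e1 : x = y := h1
    have e2 : x' = y' := h2
    exact e1 ▸ e2 ▸ hs
  | succ m ih =>
    rintro x x' y y' hs ⟨z, hz, hstep⟩ ⟨z', hz', hstep'⟩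
    have hzz' : S.sim z z' := ih hs hz hz'
    have hzy' : (z, y') ∈ u := left_const hv hT1 hR hu hun hstep' (sim_symm hv hT1 hzz')
    exact (row_block hv hT1 hR hu hun hstep y').mp hzy'

/-- `Eprop`: every walk of length `m` stays in its block. -/
def Eprop (S : AssocScheme X) (u : Set (X × X)) (m : ℕ) : Prop :=
  ∀ x y, reachN u m x y → S.sim x y

lemma dichotomy {u : Set (X × X)} (hu : u ∈ S.rels) (hun : u ∉ S.thinResidue) :
    ∀ m, 1 ≤ m → Eprop S u m ∨
      ∃ w, w ∈ S.rels ∧ w ∉ S.thinResidue ∧ ∀ x y, reachN u m x y → (x, y) ∈ w := by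
  intro m hm
  induction m with
  | zero => omega
  | succ m ih =>
    rcases Nat.eq_zero_or_pos m with rfl | hm1
    · exact Or.inr ⟨u, hu, hun, fun x y h => reach_one.mp h⟩
    rcases ih hm1 with hE | ⟨w, hw, hwn, hwall⟩
    · refine Or.inr ⟨u, hu, hun, ?_⟩
      rintro x y ⟨z, hz, hstep⟩
      exact left_const hv hT1 hR hu hun hstep (sim_symm hv hT1 (hE x z hz))
    · rcases trichotomy hv hT1 hR hw hwn hu hun with hsub | ⟨w', hw', hw'n, hw'eq⟩
      · refine Or.inl ?_
        rintro x y ⟨z, hz, hstep⟩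
        exact hsub (mem_cprod_of hw hu (hwall x z hz) hstep)
      · refine Or.inr ⟨w', hw', hw'n, ?_⟩
        rintro x y ⟨z, hz, hstep⟩
        have hmem := mem_cprod_of hw hu (hwall x z hz) hstep
        rw [hw'eq] at hmem
        have : S.relOf (x, y) = w' := hmem
        rw [← this]
        exact mem_relOf _

lemma claimC {u : Set (X × X)} (hu : u ∈ S.rels) (hun : u ∉ S.thinResidue)
    {k : ℕ} (hk : 1 ≤ k) (h : ∃ x y, reachN u k x y ∧ S.sim x y) : Eprop S u k := by
  rcases dichotomy hv hT1 hR hu hun k hk with hE | ⟨w, hw, hwn, hwall⟩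
  · exact hE
  · exfalso
    obtain ⟨x, y, hr, hsim⟩ := h
    have : S.relOf (x, y) = w := relOf_eq hw (hwall x y hr)
    exact hwn (this ▸ hsim)

lemma existsE {u : Set (X × X)} (hu : u ∈ S.rels) (hun : u ∉ S.thinResidue) :
    ∃ m, 1 ≤ m ∧ Eprop S u m := by
  set x0 := Classical.arbitrary X with hx0
  have hmaps : ∀ k ∈ Finset.range (Fintype.card X + 1),
      zseq u x0 k ∈ (Finset.univ : Finset X) := fun _ _ => Finset.mem_univ _
  have hlt : (Finset.univ : Finset X).card < (Finset.range (Fintype.card X + 1)).card := by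
    rw [Finset.card_univ, Finset.card_range]
    omega
  obtain ⟨i, -, j, -, hne, heq⟩ :=
    Finset.exists_ne_map_eq_of_card_lt_of_maps_to hlt hmaps
  have key : ∀ i j : ℕ, i < j → zseq u x0 i = zseq u x0 j → ∃ m, 1 ≤ m ∧ Eprop S u m := by
    intro i j hij he
    refine ⟨j - i, by omega, ?_⟩
    apply claimC hv hT1 hR hu hun (by omega)
    refine ⟨zseq u x0 i, zseq u x0 j, ?_, ?_⟩
    · have := reach_seg hv hu i (j - i) x0
      rwa [show i + (j - i) = j by omega] at this
    · rw [he]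
      exact sim_refl hv _
  rcases lt_or_gt_of_ne hne with h | h
  · exact key i j h heq
  · exact key j i h heq.symm

end reach

end AssocScheme
namespace AssocScheme

variable {X : Type*} [Fintype X] {S : AssocScheme X}

section cover
variable [Nonempty X] (hv : ∀ s ∈ S.rels, 0 < S.val s)
  (hT1 : ∀ t ∈ S.thinResidue, S.val t = 1)
  (hR : ∀ s ∈ S.rels, s ∉ S.thinResidue → S.sprod S.thinResidue {s} = {s})
  {p : ℕ} (hp : S.IsPScheme p) (hcard : Fintype.card X = p ^ 3)
  (hTcard : (S.RF.filter (· ∈ S.thinResidue)).card = p * p)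
include hv hT1

lemma nT_eq (hTcard : (S.RF.filter (· ∈ S.thinResidue)).card = p * p) :
    ∑ u ∈ S.RF.filter (· ∈ S.thinResidue), S.val u = p * p := by
  rw [Finset.sum_congr rfl (fun u hu => hT1 u (Finset.mem_filter.mp hu).2)]
  simp [hTcard]

include hR hp hcard hTcard in
lemma cover {u v : Set (X × X)} (hu : u ∈ S.rels) (hun : u ∉ S.thinResidue)
    (hvr : v ∈ S.rels) (hvn : v ∉ S.thinResidue) :
    ∃ k, 1 ≤ k ∧ ∀ x y, reachN u k x y → (x, y) ∈ v := by
  have hnT := nT_eq hv hT1 hTcard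
  set nT := ∑ u ∈ S.RF.filter (· ∈ S.thinResidue), S.val u with hnTdef
  have hE := existsE hv hT1 hR hu hun
  set m0 := Nat.find hE with hm0def
  obtain ⟨hm01, hm0E⟩ : 1 ≤ m0 ∧ Eprop S u m0 := Nat.find_spec hE
  have hmin : ∀ k, k < m0 → ¬(1 ≤ k ∧ Eprop S u k) := fun k hk => Nat.find_min hE hk
  set es : X → X → Prop := fun x y => ∃ k, k < m0 ∧ ∃ z, reachN u k x z ∧ S.sim z y
    with hesdef
  have hrefl : ∀ x, es x x := fun x => ⟨0, by omega, x, rfl, sim_refl hv x⟩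
  have hsymm : ∀ {x y}, es x y → es y x := by
    rintro x y ⟨k, hk, z, hz, hs⟩
    rcases Nat.eq_zero_or_pos k with rfl | hk1
    · have : x = z := hz
      subst this
      exact ⟨0, by omega, y, rfl, sim_symm hv hT1 hs⟩
    · obtain ⟨w, hw⟩ := reach_exists hv hu (m0 - k) y
      obtain ⟨w2, hw2⟩ := reach_exists hv hu (m0 - k) z
      have hw2w : S.sim w2 w := reach_congr hv hT1 hR hu hun (m0 - k) hs hw2 hw
      have hxw2 : reachN u m0 x w2 := by
        have := (reach_add u k (m0 - k) x w2).mpr ⟨z, hz, hw2⟩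
        rwa [show k + (m0 - k) = m0 by omega] at this
      have hsxw2 : S.sim x w2 := hm0E x w2 hxw2
      refine ⟨m0 - k, by omega, w, hw, ?_⟩
      exact sim_symm hv hT1 (sim_trans hsxw2 hw2w)
  have htrans : ∀ {x y z}, es x y → es y z → es x z := by
    rintro x y y' ⟨k, hk, z, hz, hs⟩ ⟨l, hl, w, hw, hs'⟩
    obtain ⟨w2, hw2⟩ := reach_exists hv hu l z
    have hw2w : S.sim w2 w := reach_congr hv hT1 hR hu hun l hs hw2 hw
    have hxw2 : reachN u (k + l) x w2 := (reach_add u k l x w2).mpr ⟨z, hz, hw2⟩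
    have hsw2y' : S.sim w2 y' := sim_trans hw2w hs'
    rcases Nat.lt_or_ge (k + l) m0 with hlt | hge
    · exact ⟨k + l, hlt, w2, hxw2, hsw2y'⟩
    · have hdecomp : reachN u ((k + l - m0) + m0) x w2 := by
        rwa [show k + l - m0 + m0 = k + l by omega]
      obtain ⟨mid, hmid1, hmid2⟩ := (reach_add u (k + l - m0) m0 x w2).mp hdecomp
      have hsimmid : S.sim mid w2 := hm0E mid w2 hmid2
      exact ⟨k + l - m0, by omega, mid, hmid1, sim_trans hsimmid hsw2y'⟩
  have hdist : ∀ x, ∀ i j, i < j → j < m0 → ¬ S.sim (zseq u x i) (zseq u x j) := by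
    intro x i j hij hj hsim
    have hreach : reachN u (j - i) (zseq u x i) (zseq u x j) := by
      have := reach_seg hv hu i (j - i) x
      rwa [show i + (j - i) = j by omega] at this
    have hEk : Eprop S u (j - i) :=
      claimC hv hT1 hR hu hun (by omega) ⟨_, _, hreach, hsim⟩
    exact hmin (j - i) (by omega) ⟨by omega, hEk⟩
  set cF : X → Finset X :=
    fun x => (Finset.range m0).biUnion (fun k => S.blockOf S.thinResidue (zseq u x k))
    with hcFdef
  have hmemC : ∀ x y, y ∈ cF x ↔ es x y := by
    intro x y
    rw [hcFdef]
    simp only [Finset.mem_biUnion, Finset.mem_range]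
    constructor
    · rintro ⟨k, hk, hy⟩
      exact ⟨k, hk, zseq u x k, reach_zseq hv hu k x, mem_blockOf.mp hy⟩
    · rintro ⟨k, hk, z, hz, hs⟩
      refine ⟨k, hk, ?_⟩
      rw [mem_blockOf]
      have : S.sim z (zseq u x k) :=
        reach_congr hv hT1 hR hu hun k (sim_refl hv x) hz (reach_zseq hv hu k x)
      exact sim_trans (sim_symm hv hT1 this) hs
  have hselfC : ∀ x, x ∈ cF x := fun x => (hmemC x x).mpr (hrefl x)
  have heqC : ∀ x y, y ∈ cF x → cF x = cF y := by
    intro x y hy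
    have hxy : es x y := (hmemC x y).mp hy
    ext w
    rw [hmemC, hmemC]
    exact ⟨fun h => htrans (hsymm hxy) h, fun h => htrans hxy h⟩
  have hcardC : ∀ x, (cF x).card = m0 * nT := by
    intro x
    rw [hcFdef]
    rw [Finset.card_biUnion]
    · rw [Finset.sum_congr rfl
        (fun k _ => blockOf_card thinResidue_sub hv (zseq u x k))]
      rw [Finset.sum_const, Finset.card_range, smul_eq_mul]
    · intro i hi j hj hij
      rw [Function.onFun, Finset.disjoint_left]
      intro y hyi hyj
      rw [mem_blockOf] at hyi hyj
      have : S.sim (zseq u x i) (zseq u x j) :=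
        sim_trans hyi (sim_symm hv hT1 hyj)
      rcases Nat.lt_or_ge i j with h | h
      · exact hdist x i j h (Finset.mem_range.mp hj) this
      · have hij2 : j < i := by omega
        exact hdist x j i hij2 (Finset.mem_range.mp hi) (sim_symm hv hT1 this)
  have hpart := card_dvd_of_partition cF hselfC heqC (m0 * nT) hcardC
  have hm0p : m0 = p := by
    have hppos : 0 < p := hp.1.pos
    have : p ^ 3 = (Finset.univ.image cF).card * (m0 * nT) := by rw [← hcard, hpart]
    have hdvd : m0 ∣ p := by
      rw [hnT] at this
      have h2 : p * (p * p) = ((Finset.univ.image cF).card * m0) * (p * p) := by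
        calc p * (p * p) = p ^ 3 := by ring
          _ = (Finset.univ.image cF).card * (m0 * (p * p)) := this
          _ = ((Finset.univ.image cF).card * m0) * (p * p) := by ring
      have h3 : p = (Finset.univ.image cF).card * m0 :=
        Nat.eq_of_mul_eq_mul_right (Nat.mul_pos hppos hppos) h2
      exact ⟨_, by rw [h3, mul_comm]⟩
    rcases (Nat.Prime.eq_one_or_self_of_dvd hp.1 m0 hdvd) with h1 | h1
    · exfalso
      have hE1 : Eprop S u 1 := by
        have := hm0E
        rwa [h1] at this
      obtain ⟨⟨x, y⟩, hxy⟩ := rel_nonempty hv hu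
      have : S.sim x y := hE1 x y (reach_one.mpr hxy)
      rw [sim, relOf_eq hu hxy] at this
      exact hun this
    · exact h1
  obtain ⟨⟨x0, y0⟩, h0⟩ := rel_nonempty hv hvr
  have hcuniv : cF x0 = Finset.univ := by
    apply Finset.eq_univ_of_card
    rw [hcardC x0, hm0p, hnT, hcard]
    ring
  have hy0 : es x0 y0 := by
    rw [← hmemC, hcuniv]
    exact Finset.mem_univ _
  obtain ⟨k, hk, z, hz, hsimz⟩ := hy0
  have hk1 : 1 ≤ k := by
    rcases Nat.eq_zero_or_pos k with rfl | h
    · exfalso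
      have : x0 = z := hz
      subst this
      rw [sim, relOf_eq hvr h0] at hsimz
      exact hvn hsimz
    · exact h
  have hnE : ¬ Eprop S u k := by
    intro hEk
    have : S.sim x0 y0 := sim_trans (hEk x0 z hz) hsimz
    rw [sim, relOf_eq hvr h0] at this
    exact hvn this
  rcases dichotomy hv hT1 hR hu hun k hk1 with hEk | ⟨w, hwr, hwn, hwall⟩
  · exact absurd hEk hnE
  · have hx0z : (x0, z) ∈ w := hwall x0 z hz
    have hx0y0 : (x0, y0) ∈ w := right_const hv hT1 hR hwr hwn hx0z hsimz
    have : v = w := rels_eq hvr hwr h0 hx0y0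
    subst this
    exact ⟨k, hk1, hwall⟩

include hR in
lemma vchar {u v : Set (X × X)} (hu : u ∈ S.rels) (hun : u ∉ S.thinResidue)
    (hvr : v ∈ S.rels) (hvn : v ∉ S.thinResidue) {k : ℕ}
    (hkv : ∀ x y, reachN u k x y → (x, y) ∈ v) (α β : X) :
    (α, β) ∈ v ↔ ∃ γ, reachN u k α γ ∧ S.sim γ β := by
  constructor
  · intro h
    obtain ⟨γ, hγ⟩ := reach_exists hv hu k α
    refine ⟨γ, hγ, ?_⟩
    exact (row_block hv hT1 hR hvr hvn (hkv α γ hγ) β).mp h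
  · rintro ⟨γ, hγ, hs⟩
    exact right_const hv hT1 hR hvr hvn (hkv α γ hγ) hs

include hR hp hcard hTcard in
lemma support_iff {u v : Set (X × X)} (hu : u ∈ S.rels) (hun : u ∉ S.thinResidue)
    (hvr : v ∈ S.rels) (hvn : v ∉ S.thinResidue) (x y : X) :
    (∃ z, (x, z) ∈ u ∧ (z, y) ∈ v) ↔ (∃ z, (x, z) ∈ v ∧ (z, y) ∈ u) := by
  obtain ⟨k, hk1, hkv⟩ := cover hv hT1 hR hp hcard hTcard hu hun hvr hvn
  have hvc := vchar hv hT1 hR hu hun hvr hvn hkv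
  constructor
  · rintro ⟨z, h1, h2⟩
    obtain ⟨γ, hγ, hs⟩ := (hvc z y).mp h2
    have hx : reachN u (1 + k) x γ := (reach_add u 1 k x γ).mpr ⟨z, reach_one.mpr h1, hγ⟩
    rw [show 1 + k = k + 1 by omega] at hx
    obtain ⟨mid, hmid1, hmid2⟩ := (reach_add u k 1 x γ).mp hx
    refine ⟨mid, ?_, ?_⟩
    · exact (hvc x mid).mpr ⟨mid, hmid1, sim_refl hv mid⟩
    · exact right_const hv hT1 hR hu hun (reach_one.mp hmid2) hs
  · rintro ⟨z, h1, h2⟩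
    obtain ⟨γ, hγ, hs⟩ := (hvc x z).mp h1
    have hγy : (γ, y) ∈ u := left_const hv hT1 hR hu hun h2 (sim_symm hv hT1 hs)
    have hx : reachN u (k + 1) x y := (reach_add u k 1 x y).mpr ⟨γ, hγ, reach_one.mpr hγy⟩
    rw [show k + 1 = 1 + k by omega] at hx
    obtain ⟨mid, hmid1, hmid2⟩ := (reach_add u 1 k x y).mp hx
    refine ⟨mid, reach_one.mp hmid1, ?_⟩
    exact (hvc mid y).mpr ⟨y, hmid2, sim_refl hv y⟩

end cover

end AssocScheme
namespace AssocScheme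

variable {X : Type*} [Fintype X] {S : AssocScheme X}

section back
variable [Nonempty X] (hv : ∀ s ∈ S.rels, 0 < S.val s)
  (hT1 : ∀ t ∈ S.thinResidue, S.val t = 1)
include hv hT1

lemma abelian_T {G : Type*} [AddCommGroup G] (f : Set (X × X) → G)
    (hbij : Set.BijOn f S.thinResidue Set.univ)
    (hadd : ∀ t1 ∈ S.thinResidue, ∀ t2 ∈ S.thinResidue, ∀ w,
      S.cprod t1 t2 = {w} → f w = f t1 + f t2)
    {t1 t2 : Set (X × X)} (h1 : t1 ∈ S.thinResidue) (h2 : t2 ∈ S.thinResidue) :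
    rcomp t1 t2 = rcomp t2 t1 := by
  have h1r := thinResidue_sub h1
  have h2r := thinResidue_sub h2
  have c12 := (thin_right hv h1r h2r (hT1 _ h2)).2.1
  have c21 := (thin_right hv h2r h1r (hT1 _ h1)).2.1
  have m12 : rcomp t1 t2 ∈ S.thinResidue := thinResidue_closed h1 h2 (by rw [c12]; rfl)
  have m21 : rcomp t2 t1 ∈ S.thinResidue := thinResidue_closed h2 h1 (by rw [c21]; rfl)
  have e1 : f (rcomp t1 t2) = f t1 + f t2 := hadd t1 h1 t2 h2 _ c12
  have e2 : f (rcomp t2 t1) = f t2 + f t1 := hadd t2 h2 t1 h1 _ c21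
  exact hbij.injOn m12 m21 (by rw [e1, e2, add_comm])

variable (hR : ∀ s ∈ S.rels, s ∉ S.thinResidue → S.sprod S.thinResidue {s} = {s})
  {p : ℕ} (hp : S.IsPScheme p) (hcard : Fintype.card X = p ^ 3)
  (hTcard : (S.RF.filter (· ∈ S.thinResidue)).card = p * p)
include hR hp hcard hTcard

lemma backward_dir {G : Type*} [AddCommGroup G] (f : Set (X × X) → G)
    (hbij : Set.BijOn f S.thinResidue Set.univ)
    (hadd : ∀ t1 ∈ S.thinResidue, ∀ t2 ∈ S.thinResidue, ∀ w,
      S.cprod t1 t2 = {w} → f w = f t1 + f t2) :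
    S.IsCommutative := by
  intro u hu v hvr w hw
  obtain ⟨⟨x, y⟩, hxy⟩ := rel_nonempty hv hw
  by_cases huT : u ∈ S.thinResidue <;> by_cases hvT : v ∈ S.thinResidue
  · -- both thin
    have hle1 : S.a u v w ≤ 1 := (a_le_val_left hu hvr hw hxy).trans (hT1 u huT).le
    have hle2 : S.a v u w ≤ 1 := (a_le_val_left hvr hu hw hxy).trans (hT1 v hvT).le
    have hiff : S.a u v w ≠ 0 ↔ S.a v u w ≠ 0 := by
      rw [a_ne_zero_iff hu hvr hw hxy, a_ne_zero_iff hvr hu hw hxy]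
      have hc : rcomp u v = rcomp v u := abelian_T hv hT1 f hbij hadd huT hvT
      constructor
      · intro h
        have : (x, y) ∈ rcomp u v := h
        rw [hc] at this
        exact this
      · intro h
        have : (x, y) ∈ rcomp v u := h
        rw [← hc] at this
        exact this
    omega
  · -- u thin, v not
    have hle1 : S.a u v w ≤ 1 := (a_le_val_left hu hvr hw hxy).trans (hT1 u huT).le
    have hle2 : S.a v u w ≤ 1 := (a_le_val_right hvr hu hw hxy).trans (hT1 u huT).le
    have hiff : S.a u v w ≠ 0 ↔ S.a v u w ≠ 0 := by
      rw [a_ne_zero_iff hu hvr hw hxy, a_ne_zero_iff hvr hu hw hxy]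
      have hc1 : rcomp u v = v := bk_left hv hT1 hR hvr hvT huT
      have hc2 : rcomp v u = v := bk_right hv hT1 hR hvr hvT huT
      constructor
      · intro h
        have h' : (x, y) ∈ rcomp u v := h
        rw [hc1] at h'
        have : (x, y) ∈ rcomp v u := by rw [hc2]; exact h'
        exact this
      · intro h
        have h' : (x, y) ∈ rcomp v u := h
        rw [hc2] at h'
        have : (x, y) ∈ rcomp u v := by rw [hc1]; exact h'
        exact this
    omega
  · -- v thin, u not
    have hle1 : S.a u v w ≤ 1 := (a_le_val_right hu hvr hw hxy).trans (hT1 v hvT).le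
    have hle2 : S.a v u w ≤ 1 := (a_le_val_left hvr hu hw hxy).trans (hT1 v hvT).le
    have hiff : S.a u v w ≠ 0 ↔ S.a v u w ≠ 0 := by
      rw [a_ne_zero_iff hu hvr hw hxy, a_ne_zero_iff hvr hu hw hxy]
      have hc1 : rcomp v u = u := bk_left hv hT1 hR hu huT hvT
      have hc2 : rcomp u v = u := bk_right hv hT1 hR hu huT hvT
      constructor
      · intro h
        have h' : (x, y) ∈ rcomp u v := h
        rw [hc2] at h'
        have : (x, y) ∈ rcomp v u := by rw [hc1]; exact h'
        exact this
      · intro h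
        have h' : (x, y) ∈ rcomp v u := h
        rw [hc1] at h'
        have : (x, y) ∈ rcomp u v := by rw [hc2]; exact h'
        exact this
    omega
  · -- neither thin
    have e1 := a_blocked hv hT1 hR hu huT hvr hvT hw hxy
    have e2 := a_blocked hv hT1 hR hvr hvT hu huT hw hxy
    have hval : S.val u = S.val v := by
      rw [val_out hv hT1 hR hu huT, val_out hv hT1 hR hvr hvT]
    have hsupp := support_iff hv hT1 hR hp hcard hTcard hu huT hvr hvT x y
    rw [e1, e2, hval]
    by_cases hex : ∃ z, (x, z) ∈ u ∧ (z, y) ∈ v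
    · rw [if_pos hex, if_pos (hsupp.mp hex)]
    · rw [if_neg hex, if_neg (fun h => hex (hsupp.mpr h))]

end back

end AssocScheme
/-- a p-scheme of order `p^3` with thin residue isomorphic to
`C_p × C_p` is commutative iff `O^θ(S) s = {s}` for every `s ∈ S ∖ O^θ(S)`. -/
theorem stmt14 {X : Type*} [Fintype X] (S : AssocScheme X) (p : ℕ)
    (hp : S.IsPScheme p) (hcard : Fintype.card X = p ^ 3)
    (hres : S.ThinGroupIso S.thinResidue (ZMod p × ZMod p)) :
    S.IsCommutative ↔
      ∀ s ∈ S.rels, s ∉ S.thinResidue → S.sprod S.thinResidue {s} = {s} := by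
  open AssocScheme in
  have hv : ∀ s ∈ S.rels, 0 < S.val s := fun s hs => AssocScheme.val_pos hp hs
  haveI hne : Nonempty X := by
    rw [← Fintype.card_pos_iff, hcard]
    exact pow_pos hp.1.pos 3
  obtain ⟨hT1, f, hbij, hadd⟩ := hres
  have hTcard : (S.RF.filter (· ∈ S.thinResidue)).card = p * p :=
    AssocScheme.card_TF hv hp.1 f hbij
  constructor
  · intro hcomm s hs hsn
    exact AssocScheme.forward_dir hv hT1 hcomm hp hcard hTcard hs hsn
  · intro hR
    exact AssocScheme.backward_dir hv hT1 hR hp hcard hTcard f hbij hadd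
end

section
/- Let S1 and S2 be association schemes. Then S1 and S2 are both schurian if and only if their wreath product S1 ≀ S2 is schurian. -/
open Set

section helpers
variable {X : Type*}

/-- The orbital of a pair `q` under a permutation group `G`. -/
def orbRel (G : Subgroup (Equiv.Perm X)) (q : X × X) : Set (X × X) :=
  {r | ∃ g ∈ G, (g q.1, g q.2) = r}

lemma mem_orbRel_self (G : Subgroup (Equiv.Perm X)) (q : X × X) : q ∈ orbRel G q :=
  ⟨1, one_mem G, rfl⟩

lemma orbRel_mem_of_mem {G : Subgroup (Equiv.Perm X)} {q p : X × X} {g : Equiv.Perm X}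
    (hg : g ∈ G) (hp : p ∈ orbRel G q) : (g p.1, g p.2) ∈ orbRel G q := by
  obtain ⟨g', hg', h⟩ := hp
  exact ⟨g * g', mul_mem hg hg', by simp [← h]⟩

lemma orbRel_eq_of_mem {G : Subgroup (Equiv.Perm X)} {q p : X × X}
    (hp : p ∈ orbRel G q) : orbRel G p = orbRel G q := by
  ext r
  constructor
  · rintro ⟨g, hg, rfl⟩
    exact orbRel_mem_of_mem hg hp
  · rintro ⟨g, hg, rfl⟩
    obtain ⟨g', hg', h⟩ := hp
    refine ⟨g * g'⁻¹, mul_mem hg (inv_mem hg'), ?_⟩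
    have h1 : g' q.1 = p.1 := congrArg Prod.fst h
    have h2 : g' q.2 = p.2 := congrArg Prod.snd h
    simp [← h1, ← h2]

lemma orbRel_diag (G : Subgroup (Equiv.Perm X)) (ht : ∀ x y : X, ∃ g ∈ G, g x = y) (x : X) :
    orbRel G (x, x) = schemeDiag X := by
  ext ⟨a, b⟩
  constructor
  · rintro ⟨g, hg, h⟩
    have h1 : g x = a := congrArg Prod.fst h
    have h2 : g x = b := congrArg Prod.snd h
    show a = b
    rw [← h1, ← h2]
  · rintro (h : a = b)
    obtain ⟨g, hg, hgx⟩ := ht x a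
    exact ⟨g, hg, by rw [hgx, h]⟩

lemma isSchurian_iff [Fintype X] (S : AssocScheme X) :
    S.IsSchurian ↔ ∃ G : Subgroup (Equiv.Perm X), (∀ x y : X, ∃ g ∈ G, g x = y) ∧
      S.rels = {o | ∃ q, o = orbRel G q} := Iff.rfl

lemma nonempty_of_isSchurian [Fintype X] (S : AssocScheme X) (h : S.IsSchurian) :
    Nonempty X := by
  obtain ⟨G, -, hr⟩ := h
  have hd := S.diag_mem
  rw [hr] at hd
  obtain ⟨q, -⟩ := hd
  exact ⟨q.1⟩

end helpers

section wr
variable {W Y : Type*}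

/-- Semidirect-style permutation of `W × Y`. -/
def wrPerm (σ : Y → Equiv.Perm W) (τ : Equiv.Perm Y) : Equiv.Perm (W × Y) where
  toFun p := (σ p.2 p.1, τ p.2)
  invFun p := ((σ (τ.symm p.2)).symm p.1, τ.symm p.2)
  left_inv p := by simp
  right_inv p := by simp

@[simp] lemma wrPerm_apply (σ : Y → Equiv.Perm W) (τ : Equiv.Perm Y) (p : W × Y) :
    wrPerm σ τ p = (σ p.2 p.1, τ p.2) := rfl

lemma wrPerm_one : wrPerm (fun _ : Y => (1 : Equiv.Perm W)) 1 = 1 := by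
  ext p <;> simp [wrPerm]

lemma wrPerm_mul (σ σ' : Y → Equiv.Perm W) (τ τ' : Equiv.Perm Y) :
    wrPerm σ τ * wrPerm σ' τ' = wrPerm (fun y => σ (τ' y) * σ' y) (τ * τ') := by
  ext p <;> simp [wrPerm]

lemma wrPerm_inv (σ : Y → Equiv.Perm W) (τ : Equiv.Perm Y) :
    (wrPerm σ τ)⁻¹ = wrPerm (fun y => (σ (τ⁻¹ y))⁻¹) τ⁻¹ := by
  rw [inv_eq_iff_mul_eq_one, wrPerm_mul]
  convert wrPerm_one using 2
  · funext y; simp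
  · simp

/-- The wreath product of two permutation groups, acting on `W × Y`. -/
def wreathGroup (G1 : Subgroup (Equiv.Perm W)) (G2 : Subgroup (Equiv.Perm Y)) :
    Subgroup (Equiv.Perm (W × Y)) where
  carrier := {π | ∃ σ : Y → Equiv.Perm W, ∃ τ : Equiv.Perm Y,
    (∀ y, σ y ∈ G1) ∧ τ ∈ G2 ∧ π = wrPerm σ τ}
  one_mem' := ⟨fun _ => 1, 1, fun _ => one_mem G1, one_mem G2, wrPerm_one.symm⟩
  mul_mem' := by
    rintro a b ⟨σ, τ, hσ, hτ, rfl⟩ ⟨σ', τ', hσ', hτ', rfl⟩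
    exact ⟨fun y => σ (τ' y) * σ' y, τ * τ', fun y => mul_mem (hσ _) (hσ' _),
      mul_mem hτ hτ', wrPerm_mul σ σ' τ τ'⟩
  inv_mem' := by
    rintro a ⟨σ, τ, hσ, hτ, rfl⟩
    exact ⟨fun y => (σ (τ⁻¹ y))⁻¹, τ⁻¹, fun y => inv_mem (hσ _), inv_mem hτ,
      wrPerm_inv σ τ⟩

lemma mem_wreathGroup {G1 : Subgroup (Equiv.Perm W)} {G2 : Subgroup (Equiv.Perm Y)}
    {π : Equiv.Perm (W × Y)} :
    π ∈ wreathGroup G1 G2 ↔ ∃ σ : Y → Equiv.Perm W, ∃ τ : Equiv.Perm Y,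
      (∀ y, σ y ∈ G1) ∧ τ ∈ G2 ∧ π = wrPerm σ τ := Iff.rfl

/-- The lift of a relation on `W` to the wreath set. -/
def liftF (f : Set (W × W)) : Set ((W × Y) × (W × Y)) :=
  {p | p.1.2 = p.2.2 ∧ (p.1.1, p.2.1) ∈ f}

/-- The lift of a relation on `Y` to the wreath set. -/
def liftH (h : Set (Y × Y)) : Set ((W × Y) × (W × Y)) :=
  {p | (p.1.2, p.2.2) ∈ h}

lemma orbRel_wreath_fiber (G1 : Subgroup (Equiv.Perm W)) (G2 : Subgroup (Equiv.Perm Y))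
    (h2t : ∀ x y : Y, ∃ g ∈ G2, g x = y) (w1 w2 : W) (y : Y) :
    orbRel (wreathGroup G1 G2) ((w1, y), (w2, y)) = liftF (orbRel G1 (w1, w2)) := by
  ext ⟨⟨u1, z1⟩, ⟨u2, z2⟩⟩
  constructor
  · rintro ⟨g, ⟨σ, τ, hσ, hτ, rfl⟩, heq⟩
    simp only [wrPerm_apply, Prod.mk.injEq] at heq
    obtain ⟨⟨e1, e2⟩, ⟨e3, e4⟩⟩ := heq
    refine ⟨by dsimp; rw [← e2, ← e4], ⟨σ y, hσ y, ?_⟩⟩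
    dsimp
    rw [e1, e3]
  · rintro ⟨hz, g1, hg1, heq⟩
    simp only [Prod.mk.injEq] at heq
    obtain ⟨e1, e2⟩ := heq
    have hz' : z1 = z2 := hz
    obtain ⟨τ, hτ, hτy⟩ := h2t y z1
    refine ⟨wrPerm (fun _ => g1) τ, ⟨_, _, fun _ => hg1, hτ, rfl⟩, ?_⟩
    simp only [wrPerm_apply, Prod.mk.injEq]
    exact ⟨⟨e1, hτy⟩, ⟨e2, by rw [hτy, hz']⟩⟩

lemma orbRel_wreath_base (G1 : Subgroup (Equiv.Perm W)) (G2 : Subgroup (Equiv.Perm Y))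
    (h1t : ∀ x y : W, ∃ g ∈ G1, g x = y) {z1 z2 : Y} (hz : z1 ≠ z2) (w1 w2 : W) :
    orbRel (wreathGroup G1 G2) ((w1, z1), (w2, z2)) = liftH (orbRel G2 (z1, z2)) := by
  ext ⟨⟨u1, t1⟩, ⟨u2, t2⟩⟩
  constructor
  · rintro ⟨g, ⟨σ, τ, hσ, hτ, rfl⟩, heq⟩
    simp only [wrPerm_apply, Prod.mk.injEq] at heq
    obtain ⟨⟨-, e2⟩, ⟨-, e4⟩⟩ := heq
    exact ⟨τ, hτ, by dsimp; rw [e2, e4]⟩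
  · rintro ⟨τ, hτ, heq⟩
    simp only [Prod.mk.injEq] at heq
    obtain ⟨e1, e2⟩ := heq
    classical
    obtain ⟨g1, hg1, hgw1⟩ := h1t w1 u1
    obtain ⟨g2, hg2, hgw2⟩ := h1t w2 u2
    refine ⟨wrPerm (fun y => if y = z1 then g1 else if y = z2 then g2 else 1) τ,
      ⟨_, _, fun y => by split_ifs <;> simp [hg1, hg2, one_mem], hτ, rfl⟩, ?_⟩
    simp only [wrPerm_apply, Prod.mk.injEq]
    refine ⟨⟨by simp [hgw1], e1⟩, ⟨?_, e2⟩⟩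
    simp only [if_neg (Ne.symm hz), if_pos rfl]
    exact hgw2

end wr

section main
variable {W Y : Type*} [Fintype W] [Fintype Y]

lemma wreath_schurian_forward (S1 : AssocScheme W) (S2 : AssocScheme Y)
    (h1 : S1.IsSchurian) (h2 : S2.IsSchurian) :
    ∃ G : Subgroup (Equiv.Perm (W × Y)), (∀ x y : W × Y, ∃ g ∈ G, g x = y) ∧
      wreathRels S1 S2 = {o | ∃ q, o = orbRel G q} := by
  obtain ⟨w0⟩ := nonempty_of_isSchurian S1 h1
  obtain ⟨y0⟩ := nonempty_of_isSchurian S2 h2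
  obtain ⟨G1, hG1t, hG1r⟩ := h1
  obtain ⟨G2, hG2t, hG2r⟩ := h2
  refine ⟨wreathGroup G1 G2, ?_, ?_⟩
  · rintro ⟨w, y⟩ ⟨w', y'⟩
    obtain ⟨g1, hg1, e1⟩ := hG1t w w'
    obtain ⟨g2, hg2, e2⟩ := hG2t y y'
    exact ⟨wrPerm (fun _ => g1) g2, ⟨_, _, fun _ => hg1, hg2, rfl⟩, by simp [e1, e2]⟩
  · ext r
    constructor
    · rintro (⟨f, hf, rfl⟩ | ⟨h, hh, hhd, rfl⟩)
      · rw [hG1r] at hf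
        obtain ⟨⟨w1, w2⟩, rfl⟩ := hf
        exact ⟨((w1, y0), (w2, y0)), (orbRel_wreath_fiber G1 G2 hG2t w1 w2 y0).symm⟩
      · rw [hG2r] at hh
        obtain ⟨⟨z1, z2⟩, rfl⟩ := hh
        have hz : z1 ≠ z2 := by
          intro e; subst e; exact hhd (orbRel_diag G2 hG2t z1)
        exact ⟨((w0, z1), (w0, z2)), (orbRel_wreath_base G1 G2 hG1t hz w0 w0).symm⟩
    · rintro ⟨⟨⟨w1, z1⟩, ⟨w2, z2⟩⟩, rfl⟩
      by_cases hzz : z1 = z2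
      · subst hzz
        exact Or.inl ⟨orbRel G1 (w1, w2), by rw [hG1r]; exact ⟨(w1, w2), rfl⟩,
          orbRel_wreath_fiber G1 G2 hG2t w1 w2 z1⟩
      · refine Or.inr ⟨orbRel G2 (z1, z2), by rw [hG2r]; exact ⟨(z1, z2), rfl⟩, ?_,
          orbRel_wreath_base G1 G2 hG1t hzz w1 w2⟩
        intro e
        have hm := mem_orbRel_self G2 (z1, z2)
        rw [e] at hm
        exact hzz hm

end main

section bwd
variable {W Y : Type*} [Fintype W] [Fintype Y]

lemma wreath_schurian_backward (S1 : AssocScheme W) (S2 : AssocScheme Y)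
    (G : Subgroup (Equiv.Perm (W × Y))) (hGt : ∀ x y : W × Y, ∃ g ∈ G, g x = y)
    (hGr : wreathRels S1 S2 = {o | ∃ q, o = orbRel G q})
    (w0 : W) (y0 : Y) : S1.IsSchurian ∧ S2.IsSchurian := by
  have hinv : ∀ r ∈ wreathRels S1 S2, ∀ g ∈ G, ∀ p q : W × Y,
      (p, q) ∈ r → (g p, g q) ∈ r := by
    intro r hr g hg p q hpq
    rw [hGr] at hr
    obtain ⟨b, rfl⟩ := hr
    exact orbRel_mem_of_mem hg hpq
  have snd_eq : ∀ g ∈ G, ∀ p q : W × Y, p.2 = q.2 → (g p).2 = (g q).2 := by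
    intro g hg p q h
    obtain ⟨f, ⟨hf, hpf⟩, -⟩ := S1.partition (p.1, q.1)
    have hr : liftF (Y := Y) f ∈ wreathRels S1 S2 := Or.inl ⟨f, hf, rfl⟩
    have hm : (g p, g q) ∈ liftF (Y := Y) f := hinv _ hr g hg p q ⟨h, hpf⟩
    exact hm.1
  have snd_iff : ∀ g ∈ G, ∀ p q : W × Y, ((g p).2 = (g q).2 ↔ p.2 = q.2) := by
    intro g hg p q
    refine ⟨fun h => ?_, snd_eq g hg p q⟩
    have := snd_eq g⁻¹ (inv_mem hg) (g p) (g q) h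
    simpa using this
  have exPi : ∀ g ∈ G, ∃ π : Equiv.Perm Y, ∀ p : W × Y, (g p).2 = π p.2 := by
    intro g hg
    have hinj : Function.Injective (fun y => (g (w0, y)).2) := by
      intro y y' h
      exact (snd_iff g hg (w0, y) (w0, y')).mp h
    exact ⟨Equiv.ofBijective _ (Finite.injective_iff_bijective.mp hinj), fun p => by
      have h1 : (g p).2 = (g (w0, p.2)).2 := snd_eq g hg p (w0, p.2) rfl
      rw [h1]; rfl⟩
  let G2 : Subgroup (Equiv.Perm Y) :=
    { carrier := {π | ∃ g ∈ G, ∀ p : W × Y, (g p).2 = π p.2}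
      one_mem' := ⟨1, one_mem G, fun _ => rfl⟩
      mul_mem' := by
        rintro π π' ⟨g, hg, hπ⟩ ⟨g', hg', hπ'⟩
        refine ⟨g * g', mul_mem hg hg', fun p => ?_⟩
        calc ((g * g') p).2 = (g (g' p)).2 := rfl
          _ = π (g' p).2 := hπ _
          _ = π (π' p.2) := by rw [hπ' p]
      inv_mem' := by
        rintro π ⟨g, hg, hπ⟩
        refine ⟨g⁻¹, inv_mem hg, fun p => ?_⟩
        have h1 : (g (g⁻¹ p)).2 = π ((g⁻¹ p).2) := hπ _
        have h2 : g (g⁻¹ p) = p := by simp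
        rw [h2] at h1
        rw [h1]
        simp }
  have hG2t : ∀ x y : Y, ∃ π ∈ G2, π x = y := by
    intro y y'
    obtain ⟨g, hg, hgy⟩ := hGt (w0, y) (w0, y')
    obtain ⟨π, hπ⟩ := exPi g hg
    refine ⟨π, ⟨g, hg, hπ⟩, ?_⟩
    have h1 := hπ (w0, y)
    rw [hgy] at h1
    exact h1.symm
  have key2 : ∀ h ∈ S2.rels, h ≠ schemeDiag Y → ∃ q, h = orbRel G2 q := by
    intro h hh hd
    have hr : liftH (W := W) h ∈ wreathRels S1 S2 := Or.inr ⟨h, hh, hd, rfl⟩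
    rw [hGr] at hr
    obtain ⟨⟨⟨w1, z1⟩, ⟨w2, z2⟩⟩, hb⟩ := hr
    refine ⟨(z1, z2), ?_⟩
    ext ⟨t1, t2⟩
    constructor
    · intro ht
      have hm : (((w0, t1), (w0, t2)) : (W × Y) × (W × Y)) ∈
          orbRel G ((w1, z1), (w2, z2)) := by
        rw [← hb]; exact ht
      obtain ⟨g, hg, heq⟩ := hm
      obtain ⟨π, hπ⟩ := exPi g hg
      refine ⟨π, ⟨g, hg, hπ⟩, ?_⟩
      have e1 : g ((w1, z1) : W × Y) = (w0, t1) := congrArg Prod.fst heq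
      have e2 : g ((w2, z2) : W × Y) = (w0, t2) := congrArg Prod.snd heq
      have p1 := hπ (w1, z1)
      have p2 := hπ (w2, z2)
      rw [e1] at p1
      rw [e2] at p2
      show (π z1, π z2) = (t1, t2)
      rw [← p1, ← p2]
    · rintro ⟨π, ⟨g, hg, hπ⟩, heq⟩
      have hm : ((g ((w1, z1) : W × Y), g ((w2, z2) : W × Y))) ∈
          orbRel G ((w1, z1), (w2, z2)) :=
        orbRel_mem_of_mem hg (mem_orbRel_self G _)
      rw [← hb] at hm
      have hm' : ((g ((w1, z1) : W × Y)).2, (g ((w2, z2) : W × Y)).2) ∈ h := hm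
      rw [hπ (w1, z1), hπ (w2, z2)] at hm'
      have e1 : π z1 = t1 := congrArg Prod.fst heq
      have e2 : π z2 = t2 := congrArg Prod.snd heq
      rw [e1, e2] at hm'
      exact hm'
  have hS2 : S2.IsSchurian := by
    refine ⟨G2, hG2t, ?_⟩
    ext h
    constructor
    · intro hh
      by_cases hd : h = schemeDiag Y
      · exact ⟨(y0, y0), by rw [hd]; exact (orbRel_diag G2 hG2t y0).symm⟩
      · exact key2 h hh hd
    · rintro ⟨⟨z1, z2⟩, rfl⟩
      by_cases hz : z1 = z2
      · subst hz
        show orbRel G2 (z1, z1) ∈ S2.rels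
        rw [orbRel_diag G2 hG2t z1]
        exact S2.diag_mem
      · obtain ⟨h, ⟨hh, hzm⟩, -⟩ := S2.partition (z1, z2)
        have hd : h ≠ schemeDiag Y := by
          intro e; rw [e] at hzm; exact hz hzm
        obtain ⟨q, hq⟩ := key2 h hh hd
        have hmem : (z1, z2) ∈ orbRel G2 q := by rw [← hq]; exact hzm
        show orbRel G2 (z1, z2) ∈ S2.rels
        rw [orbRel_eq_of_mem hmem, ← hq]
        exact hh
  -- now the W side
  have fst_case : ∀ g ∈ G, ∀ wa : W, (g ((wa, y0) : W × Y)).2 = y0 →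
      ∃ π : Equiv.Perm W, ∀ w, g ((w, y0) : W × Y) = (π w, y0) := by
    intro g hg wa h0
    have hsnd : ∀ w, (g ((w, y0) : W × Y)).2 = y0 := fun w =>
      (snd_eq g hg (w, y0) (wa, y0) rfl).trans h0
    have hinj : Function.Injective (fun w => (g ((w, y0) : W × Y)).1) := by
      intro w w' h
      have he : g ((w, y0) : W × Y) = g ((w', y0) : W × Y) :=
        Prod.ext_iff.mpr ⟨h, (hsnd w).trans (hsnd w').symm⟩
      have := g.injective he
      exact congrArg Prod.fst this
    refine ⟨Equiv.ofBijective _ (Finite.injective_iff_bijective.mp hinj), fun w => ?_⟩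
    exact Prod.ext_iff.mpr ⟨rfl, hsnd w⟩
  let G1 : Subgroup (Equiv.Perm W) :=
    { carrier := {π | ∃ g ∈ G, ∀ w, g ((w, y0) : W × Y) = (π w, y0)}
      one_mem' := ⟨1, one_mem G, fun _ => rfl⟩
      mul_mem' := by
        rintro π π' ⟨g, hg, hπ⟩ ⟨g', hg', hπ'⟩
        refine ⟨g * g', mul_mem hg hg', fun w => ?_⟩
        calc (g * g') ((w, y0) : W × Y) = g (g' (w, y0)) := rfl
          _ = g (π' w, y0) := by rw [hπ' w]
          _ = (π (π' w), y0) := hπ _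
      inv_mem' := by
        rintro π ⟨g, hg, hπ⟩
        refine ⟨g⁻¹, inv_mem hg, fun w => ?_⟩
        have h1 : g ((π⁻¹ w, y0) : W × Y) = (w, y0) := by
          rw [hπ (π⁻¹ w)]; simp
        calc g⁻¹ ((w, y0) : W × Y) = g⁻¹ (g (π⁻¹ w, y0)) := by rw [h1]
          _ = (π⁻¹ w, y0) := by simp }
  have hG1t : ∀ x y : W, ∃ π ∈ G1, π x = y := by
    intro w w'
    obtain ⟨g, hg, hgw⟩ := hGt (w, y0) (w', y0)
    have h0 : (g ((w, y0) : W × Y)).2 = y0 := by rw [hgw]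
    obtain ⟨π, hπ⟩ := fst_case g hg w h0
    refine ⟨π, ⟨g, hg, hπ⟩, ?_⟩
    have h1 := hπ w
    rw [hgw] at h1
    exact (congrArg Prod.fst h1).symm
  have key1 : ∀ f ∈ S1.rels, ∃ q, f = orbRel G1 q := by
    intro f hf
    have hr : liftF (Y := Y) f ∈ wreathRels S1 S2 := Or.inl ⟨f, hf, rfl⟩
    rw [hGr] at hr
    obtain ⟨⟨⟨w1, z1⟩, ⟨w2, z2⟩⟩, hb⟩ := hr
    have hbm : (((w1, z1), (w2, z2)) : (W × Y) × (W × Y)) ∈ liftF (Y := Y) f := by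
      rw [hb]; exact mem_orbRel_self G _
    obtain ⟨-, hwf⟩ := hbm
    refine ⟨(w1, w2), ?_⟩
    ext ⟨u1, u2⟩
    constructor
    · intro hu
      have hA : (((w1, y0), (w2, y0)) : (W × Y) × (W × Y)) ∈
          orbRel G ((w1, z1), (w2, z2)) := by
        rw [← hb]; exact ⟨rfl, hwf⟩
      have hB : (((u1, y0), (u2, y0)) : (W × Y) × (W × Y)) ∈
          orbRel G ((w1, z1), (w2, z2)) := by
        rw [← hb]; exact ⟨rfl, hu⟩
      obtain ⟨gA, hgA, heqA⟩ := hA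
      obtain ⟨gB, hgB, heqB⟩ := hB
      have hg : gB * gA⁻¹ ∈ G := mul_mem hgB (inv_mem hgA)
      have eA1 : gA ((w1, z1) : W × Y) = (w1, y0) := congrArg Prod.fst heqA
      have eA2 : gA ((w2, z2) : W × Y) = (w2, y0) := congrArg Prod.snd heqA
      have eB1 : gB ((w1, z1) : W × Y) = (u1, y0) := congrArg Prod.fst heqB
      have eB2 : gB ((w2, z2) : W × Y) = (u2, y0) := congrArg Prod.snd heqB
      have hg1 : (gB * gA⁻¹) ((w1, y0) : W × Y) = (u1, y0) := by
        show gB (gA⁻¹ (w1, y0)) = (u1, y0)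
        rw [← eA1, Equiv.Perm.inv_def, Equiv.symm_apply_apply]
        exact eB1
      have hg2 : (gB * gA⁻¹) ((w2, y0) : W × Y) = (u2, y0) := by
        show gB (gA⁻¹ (w2, y0)) = (u2, y0)
        rw [← eA2, Equiv.Perm.inv_def, Equiv.symm_apply_apply]
        exact eB2
      have h0 : ((gB * gA⁻¹) ((w1, y0) : W × Y)).2 = y0 := by rw [hg1]
      obtain ⟨π, hπ⟩ := fst_case (gB * gA⁻¹) hg w1 h0
      refine ⟨π, ⟨gB * gA⁻¹, hg, hπ⟩, ?_⟩
      have q1 := hπ w1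
      rw [hg1] at q1
      have q2 := hπ w2
      rw [hg2] at q2
      show (π w1, π w2) = (u1, u2)
      exact Prod.ext_iff.mpr ⟨(congrArg Prod.fst q1).symm, (congrArg Prod.fst q2).symm⟩
    · rintro ⟨π, ⟨g, hg, hπ⟩, heq⟩
      have hA : (((w1, y0), (w2, y0)) : (W × Y) × (W × Y)) ∈
          orbRel G ((w1, z1), (w2, z2)) := by
        rw [← hb]; exact ⟨rfl, hwf⟩
      have hm := orbRel_mem_of_mem hg hA
      rw [← hb] at hm
      have hm2 : ((g ((w1, y0) : W × Y)).1, (g ((w2, y0) : W × Y)).1) ∈ f := hm.2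
      rw [hπ w1, hπ w2] at hm2
      have e1 : π w1 = u1 := congrArg Prod.fst heq
      have e2 : π w2 = u2 := congrArg Prod.snd heq
      rw [← e1, ← e2]
      simpa using hm2
  have hS1 : S1.IsSchurian := by
    refine ⟨G1, hG1t, ?_⟩
    ext f
    constructor
    · intro hf
      exact key1 f hf
    · rintro ⟨⟨u1, u2⟩, rfl⟩
      obtain ⟨f, ⟨hf, hum⟩, -⟩ := S1.partition (u1, u2)
      obtain ⟨q, hq⟩ := key1 f hf
      have hmem : (u1, u2) ∈ orbRel G1 q := by rw [← hq]; exact hum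
      show orbRel G1 (u1, u2) ∈ S1.rels
      rw [orbRel_eq_of_mem hmem, ← hq]
      exact hf
  exact ⟨hS1, hS2⟩

end bwd

/-- `S1` and `S2` are both schurian iff their wreath product is schurian. -/
theorem stmt16 {W Y : Type*} [Fintype W] [Fintype Y]
    (S1 : AssocScheme W) (S2 : AssocScheme Y)
    (A : AssocScheme (W × Y)) (hA : A.rels = wreathRels S1 S2) :
    (S1.IsSchurian ∧ S2.IsSchurian) ↔ A.IsSchurian := by
  constructor
  · rintro ⟨h1, h2⟩
    obtain ⟨G, hGt, hGr⟩ := wreath_schurian_forward S1 S2 h1 h2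
    exact ⟨G, hGt, by rw [hA]; exact hGr⟩
  · intro hAs
    obtain ⟨⟨w0, y0⟩⟩ := nonempty_of_isSchurian A hAs
    obtain ⟨G, hGt, hGr⟩ := hAs
    rw [hA] at hGr
    exact wreath_schurian_backward S1 S2 G hGt hGr w0 y0
end
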